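/- arXiv:1810.02853 — 3 statements merged into one kernel-verified Lean document; each statement's English description precedes it below -/
import Mathlib

section
/- Let f, g : [a,b] → ℝ be continuous. Then ∫_a^b |Tf − Tg| dx ≤ ∫_a^b |f − g| dx, where T is the operator assigning to a continuous function the derivative of the convex envelope of its primitive. -/
open Set MeasureTheory Filter Topology

/-- The convex envelope (convexification) of `f` on `[a,b]`. -/
noncomputable def convEnv (a b : ℝ) (f : ℝ → ℝ) : ℝ → ℝ := fun x =>
  sInf {y : ℝ | ∃ lam x₀ x₁ : ℝ, lam ∈ Set.Icc (0:ℝ) 1 ∧ x₀ ∈ Set.Icc a b ∧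
    x₁ ∈ Set.Icc a b ∧ (1 - lam) * x₀ + lam * x₁ = x ∧
    y = (1 - lam) * f x₀ + lam * f x₁}

/-- The primitive `F(x) = ∫_a^x f(y) dy`. -/
noncomputable def primit (a : ℝ) (f : ℝ → ℝ) : ℝ → ℝ := fun x => ∫ y in a..x, f y

/-- The operator `T`: `Tf = (F**)'`, the derivative of the convex envelope of the
primitive `F` of `f`. -/
noncomputable def Tcv (a b : ℝ) (f : ℝ → ℝ) : ℝ → ℝ :=
  derivWithin (convEnv a b (primit a f)) (Set.Icc a b)

namespace TcvProof

variable {a b : ℝ}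

def envSet (a b : ℝ) (F : ℝ → ℝ) (x : ℝ) : Set ℝ :=
  {y : ℝ | ∃ lam x₀ x₁ : ℝ, lam ∈ Set.Icc (0:ℝ) 1 ∧ x₀ ∈ Set.Icc a b ∧
    x₁ ∈ Set.Icc a b ∧ (1 - lam) * x₀ + lam * x₁ = x ∧
    y = (1 - lam) * F x₀ + lam * F x₁}

lemma convEnv_def (F : ℝ → ℝ) (x : ℝ) : convEnv a b F x = sInf (envSet a b F x) := rfl

lemma self_mem_envSet (F : ℝ → ℝ) {x : ℝ} (hx : x ∈ Icc a b) : F x ∈ envSet a b F x :=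
  ⟨0, x, x, by norm_num, hx, hx, by ring, by ring⟩

lemma lowerBound_envSet {F : ℝ → ℝ} {m : ℝ} (hm : ∀ t ∈ Icc a b, m ≤ F t) (x : ℝ) :
    m ∈ lowerBounds (envSet a b F x) := by
  rintro y ⟨lam, x₀, x₁, ⟨h0, h1⟩, hx₀, hx₁, -, rfl⟩
  have m0 := hm x₀ hx₀
  have m1 := hm x₁ hx₁
  nlinarith

lemma affine_le_env {F : ℝ → ℝ} {c₀ p : ℝ} (h : ∀ t ∈ Icc a b, c₀ + p * t ≤ F t)
    {x : ℝ} (hx : x ∈ Icc a b) : c₀ + p * x ≤ convEnv a b F x := by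
  apply le_csInf ⟨F x, self_mem_envSet F hx⟩
  rintro y ⟨lam, x₀, x₁, ⟨h0, h1⟩, hx₀, hx₁, hc, rfl⟩
  have h0' := h x₀ hx₀
  have h1' := h x₁ hx₁
  have : c₀ + p * x = (1 - lam) * (c₀ + p * x₀) + lam * (c₀ + p * x₁) := by
    rw [← hc]; ring
  nlinarith

lemma env_le {F : ℝ → ℝ} {m : ℝ} (hm : ∀ t ∈ Icc a b, m ≤ F t) {x : ℝ}
    (hx : x ∈ Icc a b) : convEnv a b F x ≤ F x :=
  csInf_le ⟨m, lowerBound_envSet hm x⟩ (self_mem_envSet F hx)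

lemma envSet_endpoint_left (F : ℝ → ℝ) (hab : a ≤ b) : envSet a b F a = {F a} := by
  ext y
  simp only [mem_singleton_iff]
  constructor
  · rintro ⟨lam, x₀, x₁, ⟨h0, h1⟩, ⟨ha0, hb0⟩, ⟨ha1, hb1⟩, hc, rfl⟩
    rcases eq_or_lt_of_le h0 with h0e | h0p
    · have hl : lam = 0 := h0e.symm
      subst hl
      have hx0 : x₀ = a := by linarith
      subst hx0; ring
    · rcases eq_or_lt_of_le h1 with h1e | h1p
      · subst h1e
        have hx1 : x₁ = a := by linarith
        subst hx1; ring
      · have hx0 : x₀ = a := by nlinarith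
        have hx1 : x₁ = a := by nlinarith
        subst hx0; subst hx1; ring
  · rintro rfl
    exact self_mem_envSet F ⟨le_refl a, hab⟩

lemma env_left (F : ℝ → ℝ) (hab : a ≤ b) : convEnv a b F a = F a := by
  rw [convEnv_def, envSet_endpoint_left F hab, csInf_singleton]

lemma envSet_endpoint_right (F : ℝ → ℝ) (hab : a ≤ b) : envSet a b F b = {F b} := by
  ext y
  simp only [mem_singleton_iff]
  constructor
  · rintro ⟨lam, x₀, x₁, ⟨h0, h1⟩, ⟨ha0, hb0⟩, ⟨ha1, hb1⟩, hc, rfl⟩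
    rcases eq_or_lt_of_le h0 with h0e | h0p
    · have hl : lam = 0 := h0e.symm
      subst hl
      have hx0 : x₀ = b := by linarith
      subst hx0; ring
    · rcases eq_or_lt_of_le h1 with h1e | h1p
      · subst h1e
        have hx1 : x₁ = b := by linarith
        subst hx1; ring
      · have hx0 : x₀ = b := by nlinarith
        have hx1 : x₁ = b := by nlinarith
        subst hx0; subst hx1; ring
  · rintro rfl
    exact self_mem_envSet F ⟨hab, le_refl b⟩

lemma env_right (F : ℝ → ℝ) (hab : a ≤ b) : convEnv a b F b = F b := by
  rw [convEnv_def, envSet_endpoint_right F hab, csInf_singleton]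

/-- Attainment of the infimum defining the convex envelope. -/
lemma env_attained {F : ℝ → ℝ} (hF : ContinuousOn F (Icc a b)) {x : ℝ}
    (hx : x ∈ Icc a b) :
    ∃ lam c d : ℝ, lam ∈ Icc (0:ℝ) 1 ∧ c ∈ Icc a b ∧ d ∈ Icc a b ∧
      (1 - lam) * c + lam * d = x ∧ convEnv a b F x = (1 - lam) * F c + lam * F d := by
  set T : Set (ℝ × ℝ × ℝ) :=
    {p | p.1 ∈ Icc (0:ℝ) 1 ∧ p.2.1 ∈ Icc a b ∧ p.2.2 ∈ Icc a b ∧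
      (1 - p.1) * p.2.1 + p.1 * p.2.2 = x} with hT
  have hTsub : T ⊆ (Icc (0:ℝ) 1) ×ˢ ((Icc a b) ×ˢ (Icc a b)) := by
    rintro ⟨l, c, d⟩ ⟨h1, h2, h3, -⟩
    exact ⟨h1, h2, h3⟩
  have hTclosed : IsClosed T := by
    have h1 : IsClosed {p : ℝ × ℝ × ℝ | p.1 ∈ Icc (0:ℝ) 1} :=
      isClosed_Icc.preimage continuous_fst
    have h2 : IsClosed {p : ℝ × ℝ × ℝ | p.2.1 ∈ Icc a b} :=
      isClosed_Icc.preimage (continuous_fst.comp continuous_snd)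
    have h3 : IsClosed {p : ℝ × ℝ × ℝ | p.2.2 ∈ Icc a b} :=
      isClosed_Icc.preimage (continuous_snd.comp continuous_snd)
    have h4 : IsClosed {p : ℝ × ℝ × ℝ | (1 - p.1) * p.2.1 + p.1 * p.2.2 = x} := by
      apply isClosed_eq _ continuous_const
      fun_prop
    have : T = ({p : ℝ × ℝ × ℝ | p.1 ∈ Icc (0:ℝ) 1} ∩ {p | p.2.1 ∈ Icc a b}) ∩
        ({p | p.2.2 ∈ Icc a b} ∩ {p | (1 - p.1) * p.2.1 + p.1 * p.2.2 = x}) := by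
      ext p; simp only [hT, mem_setOf_eq, mem_inter_iff]; tauto
    rw [this]
    exact (h1.inter h2).inter (h3.inter h4)
  have hTcomp : IsCompact T :=
    (isCompact_Icc.prod (isCompact_Icc.prod isCompact_Icc)).of_isClosed_subset hTclosed hTsub
  have hTne : T.Nonempty := ⟨(0, x, x), by
    refine ⟨by norm_num, hx, hx, by ring⟩⟩
  have hφ : ContinuousOn (fun p : ℝ × ℝ × ℝ => (1 - p.1) * F p.2.1 + p.1 * F p.2.2) T := by
    apply ContinuousOn.add
    · apply ContinuousOn.mul
      · fun_prop
      · exact hF.comp (continuous_fst.comp continuous_snd).continuousOn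
          (fun p hp => (hTsub hp).2.1)
    · apply ContinuousOn.mul
      · fun_prop
      · exact hF.comp (continuous_snd.comp continuous_snd).continuousOn
          (fun p hp => (hTsub hp).2.2)
  obtain ⟨p₀, hp₀T, hp₀min⟩ := hTcomp.exists_isMinOn hTne hφ
  obtain ⟨hl, hc, hd, hcomb⟩ := hp₀T
  refine ⟨p₀.1, p₀.2.1, p₀.2.2, hl, hc, hd, hcomb, ?_⟩
  apply le_antisymm
  · exact csInf_le ⟨_, fun y hy => by
      obtain ⟨lam, x₀, x₁, h1, h2, h3, h4, rfl⟩ := hy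
      exact hp₀min (⟨h1, h2, h3, h4⟩ : (lam, x₀, x₁) ∈ T)⟩
      ⟨p₀.1, p₀.2.1, p₀.2.2, hl, hc, hd, hcomb, rfl⟩
  · apply le_csInf ⟨F x, self_mem_envSet F hx⟩
    rintro y ⟨lam, x₀, x₁, h1, h2, h3, h4, rfl⟩
    exact hp₀min (⟨h1, h2, h3, h4⟩ : (lam, x₀, x₁) ∈ T)

/-- Lipschitz constants are nonnegative. -/
lemma K_nonneg {F : ℝ → ℝ} {K : ℝ} (hab : a < b)
    (hK : ∀ x ∈ Icc a b, ∀ y ∈ Icc a b, |F x - F y| ≤ K * |x - y|) : 0 ≤ K := by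
  have h := hK a ⟨le_refl a, hab.le⟩ b ⟨hab.le, le_refl b⟩
  have h2 : (0:ℝ) ≤ |F a - F b| := abs_nonneg _
  have h3 : |a - b| = b - a := by rw [abs_sub_comm]; exact abs_of_pos (by linarith)
  nlinarith

/-- Lower bound for F from Lipschitz property. -/
lemma F_lowerBound {F : ℝ → ℝ} {K : ℝ} (hab : a < b)
    (hK : ∀ x ∈ Icc a b, ∀ y ∈ Icc a b, |F x - F y| ≤ K * |x - y|) :
    ∀ t ∈ Icc a b, F a - K * (b - a) ≤ F t := by
  intro t ht
  have h := hK a ⟨le_refl a, hab.le⟩ t ht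
  have h2 : |a - t| ≤ b - a := by rw [abs_sub_comm]; rw [abs_of_nonneg (by linarith [ht.1])]; linarith [ht.2]
  have hK0 := K_nonneg hab hK
  have := abs_le.1 h
  nlinarith

/-- The envelope is below any chord over an interval containing x. -/
lemma env_le_chord {F : ℝ → ℝ} {m : ℝ} (hm : ∀ t ∈ Icc a b, m ≤ F t)
    {x c d : ℝ} (hc : c ∈ Icc a b) (hd : d ∈ Icc a b) (hcx : c ≤ x) (hxd : x ≤ d)
    (hcd : c < d) :
    convEnv a b F x * (d - c) ≤ F c * (d - x) + F d * (x - c) := by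
  set μ := (x - c) / (d - c) with hμ
  have hdc : (0:ℝ) < d - c := by linarith
  have hμ0 : 0 ≤ μ := div_nonneg (by linarith) hdc.le
  have hμ1 : μ ≤ 1 := by rw [div_le_one hdc]; linarith
  have hcomb : (1 - μ) * c + μ * d = x := by rw [hμ]; field_simp; ring
  have hel : (1 - μ) * F c + μ * F d ∈ envSet a b F x :=
    ⟨μ, c, d, ⟨hμ0, hμ1⟩, hc, hd, hcomb, rfl⟩
  have hle : convEnv a b F x ≤ (1 - μ) * F c + μ * F d :=
    csInf_le ⟨m, lowerBound_envSet hm x⟩ hel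
  have : ((1 - μ) * F c + μ * F d) * (d - c) = F c * (d - x) + F d * (x - c) := by
    rw [hμ]; field_simp; ring
  nlinarith

/-- Supporting line for the convex envelope, with contact points. -/
lemma env_support {F : ℝ → ℝ} {K : ℝ} (hab : a < b) (hF : ContinuousOn F (Icc a b))
    (hK : ∀ x ∈ Icc a b, ∀ y ∈ Icc a b, |F x - F y| ≤ K * |x - y|)
    {x : ℝ} (hx : x ∈ Icc a b) :
    ∃ p c d : ℝ, |p| ≤ K ∧ c ∈ Icc a b ∧ d ∈ Icc a b ∧ c ≤ x ∧ x ≤ d ∧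
      (∀ t ∈ Icc a b, convEnv a b F x + p * (t - x) ≤ F t) ∧
      F c = convEnv a b F x + p * (c - x) ∧ F d = convEnv a b F x + p * (d - x) := by
  have hK0 := K_nonneg hab hK
  have hm := F_lowerBound hab hK
  obtain ⟨lam, c, d, hl, hc, hd, hcomb, hEval⟩ := env_attained hF hx
  set E := convEnv a b F with hE
  have hmain : (∃ c' d' : ℝ, c' ∈ Icc a b ∧ d' ∈ Icc a b ∧ c' < x ∧ x < d' ∧
      E x * (d' - c') = F c' * (d' - x) + F d' * (x - c')) ∨ E x = F x := by
    rcases le_or_gt c d with hcd | hcd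
    · rcases eq_or_lt_of_le hcd with hcd' | hcd'
      · right; subst hcd'
        have hxc : x = c := by rw [← hcomb]; ring
        subst hxc; rw [hEval]; ring
      · rcases eq_or_lt_of_le hl.1 with h0 | h0
        · right
          have hxc : x = c := by rw [← hcomb, ← h0]; ring
          subst hxc; rw [hEval, ← h0]; ring
        · rcases eq_or_lt_of_le hl.2 with h1 | h1
          · right
            have hxd : x = d := by rw [← hcomb, h1]; ring
            subst hxd; rw [hEval, h1]; ring
          · left
            refine ⟨c, d, hc, hd, by nlinarith, by nlinarith, ?_⟩
            rw [hEval, ← hcomb]; ring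
    · -- c > d : swap roles
      rcases eq_or_lt_of_le hl.1 with h0 | h0
      · right
        have hxc : x = c := by rw [← hcomb, ← h0]; ring
        subst hxc; rw [hEval, ← h0]; ring
      · rcases eq_or_lt_of_le hl.2 with h1 | h1
        · right
          have hxd : x = d := by rw [← hcomb, h1]; ring
          subst hxd; rw [hEval, h1]; ring
        · left
          refine ⟨d, c, hd, hc, by nlinarith, by nlinarith, ?_⟩
          rw [hEval, ← hcomb]; ring
  clear hcomb hEval hl hc hd
  rcases hmain with ⟨c, d, hc, hd, hcx, hxd, hchord⟩ | hdeg
  · -- nondegenerate case: chord line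
    have hdc : (0:ℝ) < d - c := by linarith
    set p := (F d - F c) / (d - c) with hp
    have hFc : F c = E x + p * (c - x) := by rw [hp]; field_simp; nlinarith [hchord]
    have hFd : F d = E x + p * (d - x) := by rw [hp]; field_simp; nlinarith [hchord]
    have hpK : |p| ≤ K := by
      rw [hp, abs_div, abs_of_pos hdc, div_le_iff₀ hdc]
      have := hK d hd c hc
      have : |F d - F c| ≤ K * (d - c) := by
        have h2 : |d - c| = d - c := abs_of_pos hdc
        rw [h2] at this; exact this
      exact this
    refine ⟨p, c, d, hpK, hc, hd, hcx.le, hxd.le, ?_, hFc, hFd⟩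
    intro t ht
    by_contra hcon
    push_neg at hcon
    rcases le_or_gt t x with htx | htx
    · -- use chord (t, d)
      have htd : t < d := lt_of_le_of_lt htx hxd
      have h1 : E x * (d - t) ≤ F t * (d - x) + F d * (x - t) :=
        env_le_chord hm ht hd htx hxd.le htd
      rw [hFd] at h1
      nlinarith
    · -- use chord (c, t)
      have hct : c < t := lt_trans hcx htx
      have h1 : E x * (t - c) ≤ F c * (t - x) + F t * (x - c) :=
        env_le_chord hm hc ht hcx.le htx.le hct
      rw [hFc] at h1
      nlinarith
  · -- degenerate case: E x = F x ; build slope via inf/sup of one-sided slopes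
    have hkey : ∀ c' ∈ Icc a b, c' ≤ x → ∀ d' ∈ Icc a b, x ≤ d' →
        (F x - F c') * (d' - x) ≤ (F d' - F x) * (x - c') := by
      intro c' hc' hcx' d' hd' hxd'
      rcases eq_or_lt_of_le hcx' with h | h
      · subst h; simp
      rcases eq_or_lt_of_le hxd' with h2 | h2
      · subst h2; simp
      have h3 := env_le_chord hm hc' hd' hcx' hxd' (lt_trans h h2)
      rw [← hdeg]; nlinarith [h3, hdeg]
    rcases lt_or_eq_of_le hx.2 with hxb | hxb
    · -- x < b : right slopes
      set Sl := {s : ℝ | ∃ d' : ℝ, d' ∈ Icc a b ∧ x < d' ∧ s = (F d' - F x) / (d' - x)} with hSl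
      have hne : Sl.Nonempty := ⟨(F b - F x) / (b - x), b, ⟨hab.le, le_refl b⟩, hxb, rfl⟩
      have hbdd : ∀ s ∈ Sl, -K ≤ s := by
        rintro s ⟨d', hd', hxd', rfl⟩
        rw [le_div_iff₀ (by linarith)]
        have := abs_le.1 (hK d' hd' x hx)
        have h2 : |d' - x| = d' - x := abs_of_pos (by linarith)
        rw [h2] at this
        nlinarith [this.1]
      have hbddB : BddBelow Sl := ⟨-K, fun s hs => hbdd s hs⟩
      set p := sInf Sl with hp
      have hpge : -K ≤ p := le_csInf hne hbdd
      have hple : p ≤ K := by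
        have hb : (F b - F x) / (b - x) ∈ Sl := ⟨b, ⟨hab.le, le_refl b⟩, hxb, rfl⟩
        have h1 : p ≤ (F b - F x) / (b - x) := csInf_le hbddB hb
        have h2 : (F b - F x) / (b - x) ≤ K := by
          rw [div_le_iff₀ (by linarith)]
          have := abs_le.1 (hK b ⟨hab.le, le_refl b⟩ x hx)
          have h3 : |b - x| = b - x := abs_of_pos (by linarith)
          rw [h3] at this
          nlinarith [this.2]
        linarith
      refine ⟨p, x, x, abs_le.2 ⟨hpge, hple⟩, hx, hx, le_refl x, le_refl x, ?_, by rw [hdeg]; ring, by rw [hdeg]; ring⟩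
      intro t ht
      rw [hdeg]
      rcases lt_trichotomy t x with htx | htx | htx
      · -- t < x : left slope ≤ p
        have hleft : (F x - F t) / (x - t) ≤ p := by
          apply le_csInf hne
          rintro s ⟨d', hd', hxd', rfl⟩
          rw [div_le_div_iff₀ (by linarith) (by linarith)]
          have := hkey t ht htx.le d' hd' hxd'.le
          nlinarith
        rw [div_le_iff₀ (by linarith)] at hleft
        nlinarith
      · subst htx; simp
      · have hel : (F t - F x) / (t - x) ∈ Sl := ⟨t, ht, htx, rfl⟩
        have h1 : p ≤ (F t - F x) / (t - x) := csInf_le hbddB hel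
        rw [le_div_iff₀ (by linarith)] at h1
        nlinarith
    · -- x = b : left slopes, use sup
      have hax : a < x := by rw [hxb]; exact hab
      set Sl := {s : ℝ | ∃ c' : ℝ, c' ∈ Icc a b ∧ c' < x ∧ s = (F x - F c') / (x - c')} with hSl
      have hne : Sl.Nonempty := ⟨(F x - F a) / (x - a), a, ⟨le_refl a, hab.le⟩, hax, rfl⟩
      have hbdd : ∀ s ∈ Sl, s ≤ K := by
        rintro s ⟨c', hc', hcx', rfl⟩
        rw [div_le_iff₀ (by linarith)]
        have := abs_le.1 (hK x hx c' hc')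
        have h2 : |x - c'| = x - c' := abs_of_pos (by linarith)
        rw [h2] at this
        nlinarith [this.2]
      have hbddB : BddAbove Sl := ⟨K, fun s hs => hbdd s hs⟩
      set p := sSup Sl with hp
      have hple : p ≤ K := csSup_le hne hbdd
      have hpge : -K ≤ p := by
        have hb : (F x - F a) / (x - a) ∈ Sl := ⟨a, ⟨le_refl a, hab.le⟩, hax, rfl⟩
        have h1 : (F x - F a) / (x - a) ≤ p := le_csSup hbddB hb
        have h2 : -K ≤ (F x - F a) / (x - a) := by
          rw [le_div_iff₀ (by linarith)]
          have := abs_le.1 (hK x hx a ⟨le_refl a, hab.le⟩)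
          have h3 : |x - a| = x - a := abs_of_pos (by linarith)
          rw [h3] at this
          nlinarith [this.1]
        linarith
      refine ⟨p, x, x, abs_le.2 ⟨hpge, hple⟩, hx, hx, le_refl x, le_refl x, ?_, by rw [hdeg]; ring, by rw [hdeg]; ring⟩
      intro t ht
      rw [hdeg]
      rcases lt_trichotomy t x with htx | htx | htx
      · have hel : (F x - F t) / (x - t) ∈ Sl := ⟨t, ht, htx, rfl⟩
        have h1 : (F x - F t) / (x - t) ≤ p := le_csSup hbddB hel
        rw [div_le_iff₀ (by linarith)] at h1
        nlinarith
      · subst htx; simp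
      · -- t > x : but x = b and t ≤ b, contradiction
        exfalso
        rw [hxb] at htx
        exact absurd ht.2 (not_le.2 htx)

/-- The envelope has the supporting line below it. -/
lemma env_ge_line {F : ℝ → ℝ} {p x : ℝ}
    (h : ∀ t ∈ Icc a b, convEnv a b F x + p * (t - x) ≤ F t) :
    ∀ t ∈ Icc a b, convEnv a b F x + p * (t - x) ≤ convEnv a b F t := by
  intro t ht
  have h' : ∀ s ∈ Icc a b, (convEnv a b F x - p * x) + p * s ≤ F s := by
    intro s hs
    have := h s hs
    linarith [this]
  have := affine_le_env h' ht
  linarith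

lemma env_convexOn {F : ℝ → ℝ} {K : ℝ} (hab : a < b) (hF : ContinuousOn F (Icc a b))
    (hK : ∀ x ∈ Icc a b, ∀ y ∈ Icc a b, |F x - F y| ≤ K * |x - y|) :
    ConvexOn ℝ (Icc a b) (convEnv a b F) := by
  refine ⟨convex_Icc a b, ?_⟩
  intro u hu v hv s t hs ht hst
  have hz : s • u + t • v ∈ Icc a b := (convex_Icc a b) hu hv hs ht hst
  simp only [smul_eq_mul] at *
  obtain ⟨p, c, d, hpK, hc, hd, hcx, hxd, hline, hFc, hFd⟩ := env_support hab hF hK hz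
  have hu' := env_ge_line hline u hu
  have hv' := env_ge_line hline v hv
  have h3 := add_le_add (mul_le_mul_of_nonneg_left hu' hs) (mul_le_mul_of_nonneg_left hv' ht)
  have hs1 : s = 1 - t := by linarith
  subst hs1
  have h4 : (1-t) * (convEnv a b F ((1-t)*u + t*v) + p * (u - ((1-t)*u + t*v)))
      + t * (convEnv a b F ((1-t)*u + t*v) + p * (v - ((1-t)*u + t*v)))
      = convEnv a b F ((1-t)*u + t*v) := by ring
  linarith

lemma env_lipschitz {F : ℝ → ℝ} {K : ℝ} (hab : a < b) (hF : ContinuousOn F (Icc a b))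
    (hK : ∀ x ∈ Icc a b, ∀ y ∈ Icc a b, |F x - F y| ≤ K * |x - y|) :
    ∀ x ∈ Icc a b, ∀ y ∈ Icc a b, |convEnv a b F x - convEnv a b F y| ≤ K * |x - y| := by
  have key : ∀ x ∈ Icc a b, ∀ y ∈ Icc a b,
      convEnv a b F y - convEnv a b F x ≤ K * |x - y| := by
    intro x hx y hy
    obtain ⟨p, c, d, hpK, hc, hd, hcx, hxd, hline, hFc, hFd⟩ := env_support hab hF hK hy
    have := env_ge_line hline x hx
    have h1 : convEnv a b F y - convEnv a b F x ≤ -(p * (x - y)) := by linarith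
    have h2 : -(p * (x - y)) ≤ |p| * |x - y| := by
      calc -(p * (x - y)) ≤ |p * (x - y)| := neg_le_abs _
        _ = |p| * |x - y| := abs_mul _ _
    have h3 : |p| * |x - y| ≤ K * |x - y| :=
      mul_le_mul_of_nonneg_right hpK (abs_nonneg _)
    linarith
  intro x hx y hy
  rw [abs_sub_le_iff]
  constructor
  · have := key y hy x hx
    rwa [abs_sub_comm] at this
  · exact key x hx y hy

lemma env_continuousOn {F : ℝ → ℝ} {K : ℝ} (hab : a < b) (hF : ContinuousOn F (Icc a b))
    (hK : ∀ x ∈ Icc a b, ∀ y ∈ Icc a b, |F x - F y| ≤ K * |x - y|) :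
    ContinuousOn (convEnv a b F) (Icc a b) := by
  have hlip := env_lipschitz hab hF hK
  have hK0 : 0 ≤ K := by
    have h := hlip a ⟨le_refl a, hab.le⟩ b ⟨hab.le, le_refl b⟩
    have : (0:ℝ) ≤ |convEnv a b F a - convEnv a b F b| := abs_nonneg _
    have h3 : |a - b| = b - a := by rw [abs_sub_comm]; exact abs_of_pos (by linarith)
    nlinarith
  have : LipschitzOnWith (Real.toNNReal K) (convEnv a b F) (Icc a b) := by
    rw [lipschitzOnWith_iff_dist_le_mul]
    intro x hx y hy
    have := hlip x hx y hy
    simpa [Real.dist_eq, Real.coe_toNNReal K hK0] using this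
  exact this.continuousOn

section rder
variable {K : ℝ} {E : ℝ → ℝ} (hab : a < b) (hconv : ConvexOn ℝ (Icc a b) E)
  (hlip : ∀ x ∈ Icc a b, ∀ y ∈ Icc a b, |E x - E y| ≤ K * |x - y|)

include hab hlip in
lemma env_K_nonneg : 0 ≤ K := by
  have h := hlip a ⟨le_refl a, hab.le⟩ b ⟨hab.le, le_refl b⟩
  have h2 : (0:ℝ) ≤ |E a - E b| := abs_nonneg _
  have h3 : |a - b| = b - a := by rw [abs_sub_comm]; exact abs_of_pos (by linarith)
  nlinarith

noncomputable def rder (b : ℝ) (E : ℝ → ℝ) (x : ℝ) : ℝ := sInf (slope E x '' Ioo x b)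


include hlip in
lemma abs_slope_le {x y : ℝ} (hx : x ∈ Icc a b) (hy : y ∈ Icc a b) (hxy : x ≠ y) :
    |slope E x y| ≤ K := by
  have h := hlip y hy x hx
  have hne : y - x ≠ 0 := sub_ne_zero.2 (Ne.symm hxy)
  rw [slope_def_field]
  rw [div_eq_mul_inv, abs_mul, abs_inv]
  have habs : |y - x| > 0 := abs_pos.2 hne
  rw [mul_inv_le_iff₀ habs]
  exact h

include hab hlip in
lemma rder_bddBelow {x : ℝ} (hx : x ∈ Ico a b) : ∀ s ∈ slope E x '' Ioo x b, (-K) ≤ s := by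
  rintro s ⟨y, hy, rfl⟩
  have hyI : y ∈ Icc a b := ⟨le_trans hx.1 hy.1.le, hy.2.le⟩
  have := abs_slope_le hlip ⟨hx.1, hx.2.le⟩ hyI (ne_of_lt hy.1)
  linarith [(abs_le.1 this).1]

lemma mid_mem {x : ℝ} (hx : x ∈ Ico a b) : (x + b) / 2 ∈ Ioo x b :=
  ⟨by linarith [hx.2], by linarith [hx.2]⟩

include hab hlip in
lemma rder_ne {x : ℝ} (hx : x ∈ Ico a b) : (slope E x '' Ioo x b).Nonempty :=
  ⟨slope E x ((x + b) / 2), mem_image_of_mem _ (mid_mem hx)⟩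

include hab hconv hlip in
lemma rder_le_slope {x y : ℝ} (hx : x ∈ Ico a b) (hy : y ∈ Ioo x b) :
    rder b E x ≤ slope E x y :=
  csInf_le ⟨-K, rder_bddBelow hab hlip hx⟩ (mem_image_of_mem _ hy)

include hab hconv hlip in
lemma slope_le_rder {x y : ℝ} (hx : x ∈ Ico a b) (hy : y ∈ Icc a b) (hyx : y < x) :
    slope E x y ≤ rder b E x := by
  apply le_csInf (rder_ne hab hlip hx)
  rintro s ⟨t, ht, rfl⟩
  have htI : t ∈ Icc a b := ⟨le_trans hx.1 ht.1.le, ht.2.le⟩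
  exact hconv.slope_mono ⟨hx.1, hx.2.le⟩ ⟨hy, ne_of_lt hyx⟩
    ⟨htI, ne_of_gt ht.1⟩ (le_trans hyx.le ht.1.le)

include hab hconv hlip in
lemma abs_rder_le {x : ℝ} (hx : x ∈ Ico a b) : |rder b E x| ≤ K := by
  rw [abs_le]
  constructor
  · exact le_csInf (rder_ne hab hlip hx) (rder_bddBelow hab hlip hx)
  · have h1 := rder_le_slope hab hconv hlip hx (mid_mem hx)
    have hyI : (x + b)/2 ∈ Icc a b := ⟨le_trans hx.1 (mid_mem hx).1.le, (mid_mem hx).2.le⟩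
    have h2 := abs_slope_le hlip ⟨hx.1, hx.2.le⟩ hyI (ne_of_lt (mid_mem hx).1)
    linarith [(abs_le.1 h2).2]

include hab hconv hlip in
lemma rder_hasDerivWithinAt {x : ℝ} (hx : x ∈ Ico a b) :
    HasDerivWithinAt E (rder b E x) (Ioi x) x := by
  have hmono : MonotoneOn (slope E x) (Ioo x b) := by
    intro u hu v hv huv
    exact hconv.slope_mono ⟨hx.1, hx.2.le⟩
      ⟨⟨le_trans hx.1 hu.1.le, hu.2.le⟩, ne_of_gt hu.1⟩
      ⟨⟨le_trans hx.1 hv.1.le, hv.2.le⟩, ne_of_gt hv.1⟩ huv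
  have hbdd : BddBelow (slope E x '' Ioo x b) := ⟨-K, rder_bddBelow hab hlip hx⟩
  have hne : (Ioo x b).Nonempty := ⟨(x + b)/2, mid_mem hx⟩
  have htend : Tendsto (slope E x) (𝓝[>] x) (𝓝 (rder b E x)) :=
    MonotoneOn.tendsto_nhdsWithin_Ioo_right hne hmono hbdd
  rw [hasDerivWithinAt_iff_tendsto_slope]
  have : (Ioi x) \ {x} = Ioi x := diff_singleton_eq_self (fun h => lt_irrefl x h)
  rw [this]
  exact htend

include hab hconv hlip in
lemma rder_monotoneOn : MonotoneOn (rder b E) (Ico a b) := by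
  intro x hx y hy hxy
  rcases eq_or_lt_of_le hxy with rfl | hxy
  · exact le_refl _
  have h1 : rder b E x ≤ slope E x y := rder_le_slope hab hconv hlip hx ⟨hxy, hy.2⟩
  have h2 : slope E y x ≤ rder b E y :=
    slope_le_rder hab hconv hlip hy ⟨hx.1, hx.2.le⟩ hxy
  rw [slope_comm] at h2
  linarith

noncomputable def Rext (a b K : ℝ) (E : ℝ → ℝ) : ℝ → ℝ :=
  fun t => if t < a then rder b E a else if t < b then rder b E t else K

lemma Rext_eq {K : ℝ} {x : ℝ} (hx : x ∈ Ico a b) : Rext a b K E x = rder b E x := by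
  simp only [Rext, if_neg (not_lt.2 hx.1), if_pos hx.2]

include hab hconv hlip in
lemma Rext_monotone : Monotone (Rext a b K E) := by
  have hK0 : 0 ≤ K := env_K_nonneg hab hlip
  have hmono := rder_monotoneOn hab hconv hlip
  have hle : ∀ t ∈ Ico a b, rder b E t ≤ K :=
    fun t ht => (abs_le.1 (abs_rder_le hab hconv hlip ht)).2
  have haI : a ∈ Ico a b := ⟨le_refl a, hab⟩
  intro u v huv
  unfold Rext
  by_cases h1 : u < a
  · rw [if_pos h1]
    by_cases h2 : v < a
    · rw [if_pos h2]
    · rw [if_neg h2]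
      by_cases h3 : v < b
      · rw [if_pos h3]; exact hmono haI ⟨not_lt.1 h2, h3⟩ (not_lt.1 h2)
      · rw [if_neg h3]; exact hle a haI
  · rw [if_neg h1]
    have h2 : ¬ v < a := fun h => h1 (lt_of_le_of_lt huv h)
    rw [if_neg h2]
    by_cases h3 : u < b
    · rw [if_pos h3]
      by_cases h4 : v < b
      · rw [if_pos h4]; exact hmono ⟨not_lt.1 h1, h3⟩ ⟨not_lt.1 h2, h4⟩ huv
      · rw [if_neg h4]; exact hle u ⟨not_lt.1 h1, h3⟩
    · rw [if_neg h3]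
      have h4 : ¬ v < b := fun h => h3 (lt_of_le_of_lt huv h)
      rw [if_neg h4]

include hab hconv hlip in
lemma hasDerivAt_of_continuousAt_Rext {x : ℝ} (hx : x ∈ Ioo a b)
    (hcont : ContinuousAt (Rext a b K E) x) : HasDerivAt E (rder b E x) x := by
  have hxI : x ∈ Ico a b := ⟨hx.1.le, hx.2⟩
  rw [hasDerivAt_iff_tendsto_slope, ← nhdsLT_sup_nhdsGT x, tendsto_sup]
  have hRx : Rext a b K E x = rder b E x := Rext_eq hxI
  constructor
  · -- left limit
    have hlower : ∀ᶠ y in 𝓝[<] x, Rext a b K E y ≤ slope E x y := by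
      filter_upwards [Ioo_mem_nhdsLT hx.1] with y hy
      rw [Rext_eq ⟨hy.1.le, lt_trans hy.2 hx.2⟩, slope_comm]
      exact rder_le_slope hab hconv hlip ⟨hy.1.le, lt_trans hy.2 hx.2⟩ ⟨hy.2, hx.2⟩
    have hupper : ∀ᶠ y in 𝓝[<] x, slope E x y ≤ rder b E x := by
      filter_upwards [Ioo_mem_nhdsLT hx.1] with y hy
      exact slope_le_rder hab hconv hlip hxI ⟨hy.1.le, (lt_trans hy.2 hx.2).le⟩ hy.2
    have hR : Tendsto (Rext a b K E) (𝓝[<] x) (𝓝 (rder b E x)) := by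
      rw [← hRx]
      exact (hcont.continuousWithinAt).tendsto
    exact tendsto_of_tendsto_of_tendsto_of_le_of_le' hR tendsto_const_nhds hlower hupper
  · -- right limit
    have hlower : ∀ᶠ y in 𝓝[>] x, rder b E x ≤ slope E x y := by
      filter_upwards [Ioo_mem_nhdsGT hx.2] with y hy
      exact rder_le_slope hab hconv hlip hxI hy
    have hupper : ∀ᶠ y in 𝓝[>] x, slope E x y ≤ Rext a b K E y := by
      filter_upwards [Ioo_mem_nhdsGT hx.2] with y hy
      rw [Rext_eq ⟨le_trans hx.1.le hy.1.le, hy.2⟩, slope_comm]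
      exact slope_le_rder hab hconv hlip ⟨le_trans hx.1.le hy.1.le, hy.2⟩
        ⟨hx.1.le, hx.2.le⟩ hy.1
    have hR : Tendsto (Rext a b K E) (𝓝[>] x) (𝓝 (rder b E x)) := by
      rw [← hRx]
      exact (hcont.continuousWithinAt).tendsto
    exact tendsto_of_tendsto_of_tendsto_of_le_of_le' tendsto_const_nhds hR hlower hupper

include hab hconv hlip in
lemma rder_ae_eq_Rext :
    (fun y => rder b E y) =ᵐ[volume.restrict (Ioc a b)] Rext a b K E := by
  have hb : ∀ᵐ x : ℝ, x ≠ b := by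
    rw [MeasureTheory.ae_iff]
    simp only [ne_eq, not_not, setOf_eq_eq_singleton]
    exact Real.volume_singleton
  rw [EventuallyEq]
  rw [ae_restrict_iff' measurableSet_Ioc]
  filter_upwards [hb] with y hy hyI
  rw [Rext_eq ⟨hyI.1.le, lt_of_le_of_ne hyI.2 hy⟩]

include hab hconv hlip in
lemma rder_intervalIntegrable : IntervalIntegrable (rder b E) volume a b := by
  have hK0 : 0 ≤ K := env_K_nonneg hab hlip
  rw [intervalIntegrable_iff_integrableOn_Ioc_of_le hab.le]
  have hR : IntegrableOn (Rext a b K E) (Ioc a b) volume := by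
    apply Integrable.mono' (integrableOn_const (C := K) measure_Ioc_lt_top.ne)
      ((Rext_monotone hab hconv hlip).measurable.aestronglyMeasurable)
    rw [ae_restrict_iff' measurableSet_Ioc]
    apply Eventually.of_forall
    intro y hyI
    rcases lt_or_ge y b with hyb | hyb
    · rw [Rext_eq ⟨hyI.1.le, hyb⟩, Real.norm_eq_abs]
      exact abs_rder_le hab hconv hlip ⟨hyI.1.le, hyb⟩
    · simp only [Rext, if_neg (not_lt.2 (le_trans hab.le hyb)), if_neg (not_lt.2 hyb)]
      rw [Real.norm_eq_abs, abs_of_nonneg hK0]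
  exact hR.congr_fun_ae (rder_ae_eq_Rext hab hconv hlip).symm

include hab hconv hlip in
lemma integral_rder (hEcont : ContinuousOn E (Icc a b)) :
    ∫ y in a..b, rder b E y = E b - E a :=
  intervalIntegral.integral_eq_sub_of_hasDeriv_right_of_le hab.le hEcont
    (fun x hx => rder_hasDerivWithinAt hab hconv hlip ⟨hx.1.le, hx.2⟩)
    (rder_intervalIntegrable hab hconv hlip)

end rder

lemma primit_sub {f : ℝ → ℝ} (hab : a < b) (hf : ContinuousOn f (Icc a b))
    {u v : ℝ} (hu : u ∈ Icc a b) (hv : v ∈ Icc a b) :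
    primit a f v - primit a f u = ∫ y in u..v, f y := by
  apply intervalIntegral.integral_interval_sub_left
  · exact (hf.mono (by rw [uIcc_of_le hv.1]; exact Icc_subset_Icc (le_refl a) hv.2)).intervalIntegrable
  · exact (hf.mono (by rw [uIcc_of_le hu.1]; exact Icc_subset_Icc (le_refl a) hu.2)).intervalIntegrable

lemma primit_continuousOn {f : ℝ → ℝ} (hab : a < b) (hf : ContinuousOn f (Icc a b)) :
    ContinuousOn (primit a f) (Icc a b) := by
  have h : IntegrableOn f (uIcc a b) volume := by
    rw [uIcc_of_le hab.le]; exact hf.integrableOn_Icc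
  have := intervalIntegral.continuousOn_primitive_interval h
  rwa [uIcc_of_le hab.le] at this

lemma primit_lipschitz {f : ℝ → ℝ} (hab : a < b) (hf : ContinuousOn f (Icc a b))
    {K : ℝ} (hK : ∀ t ∈ Icc a b, |f t| ≤ K) :
    ∀ x ∈ Icc a b, ∀ y ∈ Icc a b, |primit a f x - primit a f y| ≤ K * |x - y| := by
  intro x hx y hy
  rw [primit_sub hab hf hy hx]
  have h := intervalIntegral.norm_integral_le_of_norm_le_const (C := K) (a := y) (b := x)
    (f := f) ?_
  · rw [Real.norm_eq_abs] at h
    exact h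
  · intro t ht
    have htI : t ∈ Icc a b := by
      have h1 : Set.uIoc y x ⊆ Icc a b := by
        rw [uIoc_eq_union]
        rintro s (hs | hs)
        · exact ⟨le_trans hy.1 hs.1.le, le_trans hs.2 hx.2⟩
        · exact ⟨le_trans hx.1 hs.1.le, le_trans hs.2 hy.2⟩
      exact h1 ht
    exact hK t htI

lemma bound_of_continuousOn {f : ℝ → ℝ} (hf : ContinuousOn f (Icc a b)) :
    ∃ K : ℝ, 0 ≤ K ∧ ∀ t ∈ Icc a b, |f t| ≤ K := by
  obtain ⟨C, hC⟩ := isCompact_Icc.exists_bound_of_continuousOn hf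
  exact ⟨max C 0, le_max_right _ _, fun t ht =>
    le_trans (hC t ht) (le_max_left _ _)⟩

/-- The slope of any supporting line at an interior differentiability point equals the
derivative. -/
lemma support_slope_eq_deriv {F : ℝ → ℝ} {p q x : ℝ} (hx : x ∈ Ioo a b)
    (hline : ∀ t ∈ Icc a b, convEnv a b F x + p * (t - x) ≤ convEnv a b F t)
    (hq : HasDerivAt (convEnv a b F) q x) : q = p := by
  set E := convEnv a b F with hE
  have hmin : IsLocalMin (fun t => E t - (E x + p * (t - x))) x := by
    have hmem : Icc a b ∈ 𝓝 x := Icc_mem_nhds hx.1 hx.2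
    rw [IsLocalMin, IsMinFilter]
    filter_upwards [hmem] with t ht
    have h := hline t ht
    show E x - (E x + p * (x - x)) ≤ E t - (E x + p * (t - x))
    nlinarith
  have hder : HasDerivAt (fun t => E t - (E x + p * (t - x))) (q - p) x := by
    have h1 : HasDerivAt (fun t : ℝ => E x + p * (t - x)) p x := by
      have h2 : HasDerivAt (fun t : ℝ => t - x) 1 x := (hasDerivAt_id x).sub_const x
      have h3 := (h2.const_mul p).const_add (E x)
      simpa using h3
    exact hq.sub h1
  have := hmin.hasDerivAt_eq_zero hder
  linarith

lemma env_deriv_mono {F G : ℝ → ℝ} {KF KG p q x : ℝ} (hab : a < b)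
    (hFc : ContinuousOn F (Icc a b))
    (hFK : ∀ u ∈ Icc a b, ∀ v ∈ Icc a b, |F u - F v| ≤ KF * |u - v|)
    (hGc : ContinuousOn G (Icc a b))
    (hGK : ∀ u ∈ Icc a b, ∀ v ∈ Icc a b, |G u - G v| ≤ KG * |u - v|)
    (hη : ∀ u ∈ Icc a b, ∀ v ∈ Icc a b, u ≤ v → G u - F u ≤ G v - F v)
    (hx : x ∈ Ioo a b)
    (hp : HasDerivAt (convEnv a b F) p x) (hq : HasDerivAt (convEnv a b G) q x) :
    p ≤ q := by
  by_contra hcon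
  push_neg at hcon   -- q < p
  have hxI : x ∈ Icc a b := ⟨hx.1.le, hx.2.le⟩
  obtain ⟨pF, cF, dF, hpFK, hcF, hdF, hcFx, hxdF, hlineF, hFcF, hFdF⟩ :=
    env_support hab hFc hFK hxI
  obtain ⟨pG, cG, dG, hpGK, hcG, hdG, hcGx, hxdG, hlineG, hGcG, hGdG⟩ :=
    env_support hab hGc hGK hxI
  have hpF : p = pF := support_slope_eq_deriv hx (env_ge_line hlineF) hp
  have hqG : q = pG := support_slope_eq_deriv hx (env_ge_line hlineG) hq
  subst hpF hqG
  -- Step 1: contact points collapse to x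
  have h1 : G cF - F cF ≤ G dG - F dG := hη cF hcF dG hdG (le_trans hcFx hxdG)
  have h2 : G cF ≥ convEnv a b G x + q * (cF - x) := hlineG cF hcF
  have h3 : F dG ≥ convEnv a b F x + p * (dG - x) := hlineF dG hdG
  have h4 : dG ≤ cF := by nlinarith [hFcF, hGdG]
  have hcFeq : cF = x := le_antisymm hcFx (le_trans hxdG h4)
  have hdGeq : dG = x := le_antisymm (le_trans h4 hcFx) hxdG
  have hFx : F x = convEnv a b F x := by rw [← hcFeq]; rw [hFcF, hcFeq]; ring
  have hGx : G x = convEnv a b G x := by rw [← hdGeq]; rw [hGdG, hdGeq]; ring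
  -- Step 2: line with slope p through (x, convEnv G x) is below G
  have hclaim : ∀ t ∈ Icc a b, (convEnv a b G x - p * x) + p * t ≤ G t := by
    intro t ht
    rcases le_or_gt x t with hxt | htx
    · have h5 : G x - F x ≤ G t - F t := hη x hxI t ht hxt
      have h6 := hlineF t ht
      have : convEnv a b G x + p * (t - x) ≤ G t := by
        rw [← hGx]
        nlinarith [hFx]
      linarith [this]
    · have h7 := hlineG t ht
      have h8 : q * (t - x) ≥ p * (t - x) := by nlinarith
      have : convEnv a b G x + p * (t - x) ≤ G t := by linarith
      linarith [this]
  -- conclude q = p, contradiction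
  have hmin : ∀ t ∈ Icc a b, convEnv a b G x + p * (t - x) ≤ convEnv a b G t := by
    intro t ht
    have := affine_le_env hclaim ht
    linarith
  have := support_slope_eq_deriv hx hmin hq
  linarith


section main
variable (hab : a < b)

/-- Master a.e. package for `Tcv`. -/
lemma Tcv_package {f : ℝ → ℝ} (hab : a < b) (hf : ContinuousOn f (Icc a b)) :
    ∀ᵐ x : ℝ, x ∈ Ioo a b →
      (HasDerivAt (convEnv a b (primit a f)) (Tcv a b f x) x ∧
       Tcv a b f x = rder b (convEnv a b (primit a f)) x) := by
  obtain ⟨K, hK0, hKb⟩ := bound_of_continuousOn hf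
  have hFc := primit_continuousOn hab hf
  have hFK := primit_lipschitz hab hf hKb
  have hconv := env_convexOn hab hFc hFK
  have hlip := env_lipschitz hab hFc hFK
  set E := convEnv a b (primit a f) with hE
  have hD : {x : ℝ | ¬ ContinuousAt (Rext a b K E) x}.Countable :=
    (Rext_monotone hab hconv hlip).countable_not_continuousAt
  have hDnull : ∀ᵐ x : ℝ, ContinuousAt (Rext a b K E) x := by
    rw [MeasureTheory.ae_iff]
    exact hD.measure_zero volume
  filter_upwards [hDnull] with x hcont hxIoo
  have hda := hasDerivAt_of_continuousAt_Rext hab hconv hlip hxIoo hcont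
  have heq : Tcv a b f x = rder b E x := by
    have h1 : Tcv a b f x = derivWithin E (Icc a b) x := rfl
    rw [h1, derivWithin_of_mem_nhds (Icc_mem_nhds hxIoo.1 hxIoo.2)]
    exact hda.deriv
  exact ⟨by rw [heq]; exact hda, heq⟩

/-- `Tcv` is interval integrable. -/
lemma Tcv_intervalIntegrable {f : ℝ → ℝ} (hab : a < b) (hf : ContinuousOn f (Icc a b)) :
    IntervalIntegrable (Tcv a b f) volume a b := by
  obtain ⟨K, hK0, hKb⟩ := bound_of_continuousOn hf
  have hFc := primit_continuousOn hab hf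
  have hFK := primit_lipschitz hab hf hKb
  have hconv := env_convexOn hab hFc hFK
  have hlip := env_lipschitz hab hFc hFK
  have hint := rder_intervalIntegrable hab hconv hlip
  rw [intervalIntegrable_iff_integrableOn_Ioc_of_le hab.le] at hint ⊢
  apply hint.congr
  have hb : ∀ᵐ x : ℝ, x ≠ b := by
    rw [MeasureTheory.ae_iff]
    simp only [ne_eq, not_not, setOf_eq_eq_singleton]
    exact Real.volume_singleton
  have hpk := Tcv_package hab hf
  rw [Filter.EventuallyEq]
  rw [ae_restrict_iff' measurableSet_Ioc]
  filter_upwards [hb, hpk] with x hxb hx hxI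
  exact (hx ⟨hxI.1, lt_of_le_of_ne hxI.2 hxb⟩).2.symm

/-- Conservation: `∫ Tcv f = ∫ f`. -/
lemma Tcv_integral {f : ℝ → ℝ} (hab : a < b) (hf : ContinuousOn f (Icc a b)) :
    ∫ x in a..b, Tcv a b f x = ∫ x in a..b, f x := by
  obtain ⟨K, hK0, hKb⟩ := bound_of_continuousOn hf
  have hFc := primit_continuousOn hab hf
  have hFK := primit_lipschitz hab hf hKb
  have hconv := env_convexOn hab hFc hFK
  have hlip := env_lipschitz hab hFc hFK
  have hEcont := env_continuousOn hab hFc hFK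
  set E := convEnv a b (primit a f) with hE
  have h1 : ∫ x in a..b, Tcv a b f x = ∫ x in a..b, rder b E x := by
    apply intervalIntegral.integral_congr_ae
    have hb : ∀ᵐ x : ℝ, x ≠ b := by
      rw [MeasureTheory.ae_iff]
      simp only [ne_eq, not_not, setOf_eq_eq_singleton]
      exact Real.volume_singleton
    filter_upwards [hb, Tcv_package hab hf] with x hxb hx hxI
    rw [uIoc_of_le hab.le] at hxI
    exact (hx ⟨hxI.1, lt_of_le_of_ne hxI.2 hxb⟩).2
  rw [h1, integral_rder hab hconv hlip hEcont]
  have h2 : E b = primit a f b := env_right _ hab.le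
  have h3 : E a = primit a f a := env_left _ hab.le
  have h4 : primit a f a = 0 := intervalIntegral.integral_same
  have h5 : primit a f b = ∫ x in a..b, f x := rfl
  rw [h2, h3, h4, h5]
  ring

/-- a.e. monotonicity of `Tcv`. -/
lemma Tcv_mono_ae {f g : ℝ → ℝ} (hab : a < b) (hf : ContinuousOn f (Icc a b))
    (hg : ContinuousOn g (Icc a b)) (hfg : ∀ t ∈ Icc a b, f t ≤ g t) :
    ∀ᵐ x ∂(volume.restrict (Icc a b)), Tcv a b f x ≤ Tcv a b g x := by
  obtain ⟨Kf, hKf0, hKfb⟩ := bound_of_continuousOn hf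
  obtain ⟨Kg, hKg0, hKgb⟩ := bound_of_continuousOn hg
  have hFc := primit_continuousOn hab hf
  have hFK := primit_lipschitz hab hf hKfb
  have hGc := primit_continuousOn hab hg
  have hGK := primit_lipschitz hab hg hKgb
  have hη : ∀ u ∈ Icc a b, ∀ v ∈ Icc a b, u ≤ v →
      primit a g u - primit a f u ≤ primit a g v - primit a f v := by
    intro u hu v hv huv
    have h1 : primit a f v - primit a f u = ∫ y in u..v, f y := primit_sub hab hf hu hv
    have h2 : primit a g v - primit a g u = ∫ y in u..v, g y := primit_sub hab hg hu hv
    have hsub : Icc u v ⊆ Icc a b := Icc_subset_Icc hu.1 hv.2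
    have hfi : IntervalIntegrable f volume u v :=
      (hf.mono (by rw [uIcc_of_le huv]; exact hsub)).intervalIntegrable
    have hgi : IntervalIntegrable g volume u v :=
      (hg.mono (by rw [uIcc_of_le huv]; exact hsub)).intervalIntegrable
    have h3 : ∫ y in u..v, f y ≤ ∫ y in u..v, g y :=
      intervalIntegral.integral_mono_on huv hfi hgi (fun t ht => hfg t (hsub ht))
    linarith
  have hOoo : ∀ᵐ x ∂(volume.restrict (Icc a b)), x ∈ Ioo a b := by
    have hb : ∀ᵐ x : ℝ, x ≠ a ∧ x ≠ b := by
      have h1 : ∀ᵐ x : ℝ, x ≠ a := by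
        rw [MeasureTheory.ae_iff]
        simp only [ne_eq, not_not, setOf_eq_eq_singleton]
        exact Real.volume_singleton
      have h2 : ∀ᵐ x : ℝ, x ≠ b := by
        rw [MeasureTheory.ae_iff]
        simp only [ne_eq, not_not, setOf_eq_eq_singleton]
        exact Real.volume_singleton
      exact h1.and h2
    filter_upwards [ae_restrict_of_ae hb,
      self_mem_ae_restrict measurableSet_Icc] with x hx hxI
    exact ⟨lt_of_le_of_ne hxI.1 (Ne.symm hx.1), lt_of_le_of_ne hxI.2 hx.2⟩
  filter_upwards [ae_restrict_of_ae (Tcv_package hab hf),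
    ae_restrict_of_ae (Tcv_package hab hg), hOoo] with x hxf hxg hxIoo
  obtain ⟨hdf, -⟩ := hxf hxIoo
  obtain ⟨hdg, -⟩ := hxg hxIoo
  exact env_deriv_mono hab hFc hFK hGc hGK hη hxIoo hdf hdg

end main
end TcvProof

/-- `∫_a^b |Tf - Tg| ≤ ∫_a^b |f - g|` for continuous `f, g`. -/
theorem Tcv_L1_contraction_continuous (a b : ℝ) (hab : a < b) (f g : ℝ → ℝ)
    (hf : ContinuousOn f (Set.Icc a b)) (hg : ContinuousOn g (Set.Icc a b)) :
    (∫ x in a..b, |Tcv a b f x - Tcv a b g x|) ≤ ∫ x in a..b, |f x - g x| := by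
  open TcvProof in
  set h : ℝ → ℝ := fun x => max (f x) (g x) with hh
  have hhc : ContinuousOn h (Set.Icc a b) := hf.sup hg
  have hfh : ∀ t ∈ Set.Icc a b, f t ≤ h t := fun t _ => le_max_left _ _
  have hgh : ∀ t ∈ Set.Icc a b, g t ≤ h t := fun t _ => le_max_right _ _
  have hTf := Tcv_intervalIntegrable hab hf
  have hTg := Tcv_intervalIntegrable hab hg
  have hTh := Tcv_intervalIntegrable hab hhc
  have M1 := Tcv_mono_ae hab hf hhc hfh
  have M2 := Tcv_mono_ae hab hg hhc hgh
  -- pointwise: |Tf - Tg| ≤ 2 * Th - Tf - Tg  a.e.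
  have key : ∀ᵐ x ∂(volume.restrict (Set.Icc a b)),
      |Tcv a b f x - Tcv a b g x| ≤ 2 * Tcv a b h x - Tcv a b f x - Tcv a b g x := by
    filter_upwards [M1, M2] with x h1 h2
    rw [abs_le]
    constructor <;> linarith
  have step1 : (∫ x in a..b, |Tcv a b f x - Tcv a b g x|) ≤
      ∫ x in a..b, (2 * Tcv a b h x - Tcv a b f x - Tcv a b g x) := by
    apply intervalIntegral.integral_mono_ae_restrict hab.le
    · exact (hTf.sub hTg).abs
    · exact ((hTh.const_mul 2).sub hTf).sub hTg
    · exact key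
  have step2 : ∫ x in a..b, (2 * Tcv a b h x - Tcv a b f x - Tcv a b g x)
      = 2 * (∫ x in a..b, Tcv a b h x) - (∫ x in a..b, Tcv a b f x)
        - (∫ x in a..b, Tcv a b g x) := by
    rw [intervalIntegral.integral_sub ((hTh.const_mul 2).sub hTf) hTg,
      intervalIntegral.integral_sub (hTh.const_mul 2) hTf,
      intervalIntegral.integral_const_mul]
  have hfi : IntervalIntegrable f volume a b :=
    (hf.mono (by rw [Set.uIcc_of_le hab.le])).intervalIntegrable
  have hgi : IntervalIntegrable g volume a b :=
    (hg.mono (by rw [Set.uIcc_of_le hab.le])).intervalIntegrable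
  have hhi : IntervalIntegrable h volume a b :=
    (hhc.mono (by rw [Set.uIcc_of_le hab.le])).intervalIntegrable
  have step3 : 2 * (∫ x in a..b, Tcv a b h x) - (∫ x in a..b, Tcv a b f x)
        - (∫ x in a..b, Tcv a b g x)
      = 2 * (∫ x in a..b, h x) - (∫ x in a..b, f x) - (∫ x in a..b, g x) := by
    rw [Tcv_integral hab hf, Tcv_integral hab hg, Tcv_integral hab hhc]
  have step4 : 2 * (∫ x in a..b, h x) - (∫ x in a..b, f x) - (∫ x in a..b, g x)
      = ∫ x in a..b, (2 * h x - f x - g x) := by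
    rw [intervalIntegral.integral_sub ((hhi.const_mul 2).sub hfi) hgi,
      intervalIntegral.integral_sub (hhi.const_mul 2) hfi,
      intervalIntegral.integral_const_mul]
  have step5 : (∫ x in a..b, (2 * h x - f x - g x)) = ∫ x in a..b, |f x - g x| := by
    apply intervalIntegral.integral_congr
    intro x _
    simp only [hh]
    rcases le_total (f x) (g x) with hc | hc
    · rw [max_eq_right hc, abs_of_nonpos (by linarith)]; ring
    · rw [max_eq_left hc, abs_of_nonneg (by linarith)]; ring
  linarith [step1, step2.symm ▸ step1]
end

section
/- For every f, g ∈ L¹(a,b) it holds that ‖Tf − Tg‖_{L¹(a,b)} ≤ ‖f − g‖_{L¹(a,b)}, where T is the operator assigning to an integrable function the almost-everywhere derivative of the convex envelope of its primitive. -/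
set_option maxHeartbeats 1000000

open Set MeasureTheory Filter Topology

namespace TcvAux

variable {a b : ℝ} {F G : ℝ → ℝ}

lemma mem_chordSet_iff {a b : ℝ} {F : ℝ → ℝ} {x y : ℝ} :
    y ∈ {y : ℝ | ∃ lam x₀ x₁ : ℝ, lam ∈ Set.Icc (0:ℝ) 1 ∧ x₀ ∈ Set.Icc a b ∧
      x₁ ∈ Set.Icc a b ∧ (1 - lam) * x₀ + lam * x₁ = x ∧
      y = (1 - lam) * F x₀ + lam * F x₁} ↔ ∃ lam x₀ x₁ : ℝ,
    lam ∈ Set.Icc (0:ℝ) 1 ∧ x₀ ∈ Set.Icc a b ∧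
    x₁ ∈ Set.Icc a b ∧ (1 - lam) * x₀ + lam * x₁ = x ∧
    y = (1 - lam) * F x₀ + lam * F x₁ := Iff.rfl


variable {a b : ℝ} {F : ℝ → ℝ}

/-- The defining set of chord values. -/
def chordSet (a b : ℝ) (F : ℝ → ℝ) (x : ℝ) : Set ℝ :=
  {y : ℝ | ∃ lam x₀ x₁ : ℝ, lam ∈ Set.Icc (0:ℝ) 1 ∧ x₀ ∈ Set.Icc a b ∧
    x₁ ∈ Set.Icc a b ∧ (1 - lam) * x₀ + lam * x₁ = x ∧
    y = (1 - lam) * F x₀ + lam * F x₁}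

lemma convEnv_def (x : ℝ) : convEnv a b F x = sInf (chordSet a b F x) := rfl

lemma chordSet_nonempty (hab : a ≤ b) {x : ℝ} (hx : x ∈ Icc a b) :
    (chordSet a b F x).Nonempty := by
  refine ⟨(1 - 0) * F x + 0 * F b, 0, x, b, ?_, hx, ?_, by ring, rfl⟩
  · exact ⟨le_refl _, zero_le_one⟩
  · exact ⟨hab, le_refl _⟩

lemma chordSet_bddBelow (hab : a ≤ b) (hF : ContinuousOn F (Icc a b)) (x : ℝ) :
    BddBelow (chordSet a b F x) := by
  obtain ⟨z, hz, hzmin⟩ := isCompact_Icc.exists_isMinOn (nonempty_Icc.2 hab) hF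
  refine ⟨F z, ?_⟩
  rintro y ⟨lam, x₀, x₁, ⟨hl0, hl1⟩, h0, h1, -, rfl⟩
  have b0 : F z ≤ F x₀ := hzmin h0
  have b1 : F z ≤ F x₁ := hzmin h1
  nlinarith

lemma convEnv_le_chord (hab : a ≤ b) (hF : ContinuousOn F (Icc a b)) {lam x₀ x₁ x : ℝ}
    (hlam : lam ∈ Icc (0:ℝ) 1) (h0 : x₀ ∈ Icc a b) (h1 : x₁ ∈ Icc a b)
    (hsum : (1 - lam) * x₀ + lam * x₁ = x) :
    convEnv a b F x ≤ (1 - lam) * F x₀ + lam * F x₁ :=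
  csInf_le (chordSet_bddBelow hab hF x) ⟨lam, x₀, x₁, hlam, h0, h1, hsum, rfl⟩

lemma convEnv_le_self (hab : a ≤ b) (hF : ContinuousOn F (Icc a b)) {x : ℝ}
    (hx : x ∈ Icc a b) : convEnv a b F x ≤ F x := by
  have h := convEnv_le_chord (F := F) hab hF (lam := 0) (x₀ := x) (x₁ := b)
    ⟨le_refl _, zero_le_one⟩ hx ⟨hab, le_refl _⟩ (by ring)
  simpa using h

lemma affine_le_convEnv (hab : a ≤ b) (hF : ContinuousOn F (Icc a b)) {c t x : ℝ}
    (hct : ∀ y ∈ Icc a b, c + t * y ≤ F y) (hx : x ∈ Icc a b) :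
    c + t * x ≤ convEnv a b F x := by
  refine le_csInf (chordSet_nonempty hab hx) ?_
  rintro y ⟨lam, x₀, x₁, ⟨hl0, hl1⟩, h0, h1, hsum, rfl⟩
  have A : (1 - lam) * (c + t * x₀) ≤ (1 - lam) * F x₀ :=
    mul_le_mul_of_nonneg_left (hct x₀ h0) (by linarith)
  have B : lam * (c + t * x₁) ≤ lam * F x₁ :=
    mul_le_mul_of_nonneg_left (hct x₁ h1) hl0
  have e : c + t * x = (1 - lam) * (c + t * x₀) + lam * (c + t * x₁) := by
    rw [← hsum]; ring
  linarith

lemma convEnv_left (hab : a ≤ b) (hF : ContinuousOn F (Icc a b)) :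
    convEnv a b F a = F a := by
  refine le_antisymm (convEnv_le_self hab hF (left_mem_Icc.2 hab)) ?_
  refine le_csInf (chordSet_nonempty hab (left_mem_Icc.2 hab)) ?_
  rintro y ⟨lam, x₀, x₁, ⟨hl0, hl1⟩, h0, h1, hsum, rfl⟩
  have t0 : 0 ≤ (1 - lam) * (x₀ - a) := mul_nonneg (by linarith) (by linarith [h0.1])
  have t1 : 0 ≤ lam * (x₁ - a) := mul_nonneg hl0 (by linarith [h1.1])
  have hsum' : (1 - lam) * (x₀ - a) + lam * (x₁ - a) = 0 := by linarith [hsum]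
  have e0 : (1 - lam) * (x₀ - a) = 0 := by linarith
  have e1 : lam * (x₁ - a) = 0 := by linarith
  have E0 : (1 - lam) * F x₀ = (1 - lam) * F a := by
    rcases mul_eq_zero.1 e0 with h | h
    · rw [h]; ring
    · have : x₀ = a := by linarith
      rw [this]
  have E1 : lam * F x₁ = lam * F a := by
    rcases mul_eq_zero.1 e1 with h | h
    · rw [h]; ring
    · have : x₁ = a := by linarith
      rw [this]
  rw [E0, E1]; ring_nf; exact le_refl _

lemma convEnv_right (hab : a ≤ b) (hF : ContinuousOn F (Icc a b)) :
    convEnv a b F b = F b := by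
  refine le_antisymm (convEnv_le_self hab hF (right_mem_Icc.2 hab)) ?_
  refine le_csInf (chordSet_nonempty hab (right_mem_Icc.2 hab)) ?_
  rintro y ⟨lam, x₀, x₁, ⟨hl0, hl1⟩, h0, h1, hsum, rfl⟩
  have t0 : 0 ≤ (1 - lam) * (b - x₀) := mul_nonneg (by linarith) (by linarith [h0.2])
  have t1 : 0 ≤ lam * (b - x₁) := mul_nonneg hl0 (by linarith [h1.2])
  have hsum' : (1 - lam) * (b - x₀) + lam * (b - x₁) = 0 := by linarith [hsum]
  have e0 : (1 - lam) * (b - x₀) = 0 := by linarith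
  have e1 : lam * (b - x₁) = 0 := by linarith
  have E0 : (1 - lam) * F x₀ = (1 - lam) * F b := by
    rcases mul_eq_zero.1 e0 with h | h
    · rw [h]; ring
    · have : x₀ = b := by linarith
      rw [this]
  have E1 : lam * F x₁ = lam * F b := by
    rcases mul_eq_zero.1 e1 with h | h
    · rw [h]; ring
    · have : x₁ = b := by linarith
      rw [this]
  rw [E0, E1]; ring_nf; exact le_refl _

/-- unnormalized chord bound -/
lemma convEnv_le_chord' (hab : a ≤ b) (hF : ContinuousOn F (Icc a b)) {u v w : ℝ}
    (hu : u ∈ Icc a b) (hv : v ∈ Icc a b) (huv : u < v) (hw : w ∈ Icc u v) :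
    convEnv a b F w * (v - u) ≤ (v - w) * F u + (w - u) * F v := by
  have hvu : (0:ℝ) < v - u := by linarith
  have hlam : (w - u) / (v - u) ∈ Icc (0:ℝ) 1 := by
    constructor
    · exact div_nonneg (by linarith [hw.1]) hvu.le
    · rw [div_le_one hvu]; linarith [hw.2]
  have hsum : (1 - (w - u) / (v - u)) * u + ((w - u) / (v - u)) * v = w := by
    field_simp
    ring
  have h := convEnv_le_chord hab hF hlam hu hv hsum
  have h1 : (1 - (w - u) / (v - u)) = (v - w) / (v - u) := by
    field_simp
    ring
  rw [h1] at h
  have h2 : (v - w) / (v - u) * F u + (w - u) / (v - u) * F v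
      = ((v - w) * F u + (w - u) * F v) / (v - u) := by ring
  rw [h2] at h
  calc convEnv a b F w * (v - u) ≤ (((v - w) * F u + (w - u) * F v) / (v - u)) * (v - u) := by
        exact mul_le_mul_of_nonneg_right h hvu.le
    _ = (v - w) * F u + (w - u) * F v := by field_simp

lemma exists_affine_support (hab : a ≤ b) (hF : ContinuousOn F (Icc a b)) {x : ℝ}
    (hx : x ∈ Ioo a b) :
    ∃ c t : ℝ, (∀ y ∈ Icc a b, c + t * y ≤ F y) ∧ c + t * x = convEnv a b F x := by
  set E := convEnv a b F with hE
  set A : Set ℝ := (fun y => (E x - F y) / (x - y)) '' (Ico a x) with hA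
  have hAne : A.Nonempty := ⟨_, ⟨a, ⟨le_refl _, hx.1⟩, rfl⟩⟩
  -- the key inequality
  have key : ∀ α ∈ A, ∀ y₁ ∈ Ioc x b, α ≤ (F y₁ - E x) / (y₁ - x) := by
    rintro α ⟨y₀, ⟨hy₀a, hy₀x⟩, rfl⟩ y₁ ⟨hxy₁, hy₁b⟩
    have h0 : (0:ℝ) < x - y₀ := by linarith
    have h1 : (0:ℝ) < y₁ - x := by linarith
    have hch := convEnv_le_chord' hab hF (u := y₀) (v := y₁) (w := x)
      ⟨hy₀a, by linarith [hx.2]⟩ ⟨by linarith [hx.1], hy₁b⟩ (by linarith)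
      ⟨hy₀x.le, hxy₁.le⟩
    rw [div_le_div_iff₀ h0 h1]
    nlinarith [hch]
  have hbdd : BddAbove A := by
    refine ⟨(F b - E x) / (b - x), ?_⟩
    intro α hα
    exact key α hα b ⟨hx.2, le_refl _⟩
  set t := sSup A with ht
  refine ⟨E x - t * x, t, ?_, by ring⟩
  intro y hy
  rcases lt_trichotomy y x with h | h | h
  · have hmem : (E x - F y) / (x - y) ≤ t := le_csSup hbdd ⟨y, ⟨hy.1, h⟩, rfl⟩
    have hxy : (0:ℝ) < x - y := by linarith
    rw [div_le_iff₀ hxy] at hmem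
    nlinarith
  · subst h
    have := convEnv_le_self hab hF hy
    linarith
  · have hmem : t ≤ (F y - E x) / (y - x) := by
      refine csSup_le hAne ?_
      intro α hα
      exact key α hα y ⟨h, hy.2⟩
    have hxy : (0:ℝ) < y - x := by linarith
    rw [le_div_iff₀ hxy] at hmem
    nlinarith

lemma convEnv_convexOn (hab : a < b) (hF : ContinuousOn F (Icc a b)) :
    ConvexOn ℝ (Icc a b) (convEnv a b F) := by
  set E := convEnv a b F with hE
  refine ⟨convex_Icc a b, ?_⟩
  intro x hx y hy μ ν hμ hν hμν
  simp only [smul_eq_mul]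
  rcases eq_or_lt_of_le hμ with hμ0 | hμpos
  · have : ν = 1 := by linarith
    simp [← hμ0, this]
  rcases eq_or_lt_of_le hν with hν0 | hνpos
  · have : μ = 1 := by linarith
    simp [← hν0, this]
  rcases eq_or_ne x y with rfl | hxy
  · have e : μ * x + ν * x = x := by rw [← add_mul, hμν, one_mul]
    rw [e]
    have e2 : μ * E x + ν * E x = E x := by rw [← add_mul, hμν, one_mul]
    linarith
  have ea : μ * a + ν * a = a := by rw [← add_mul, hμν, one_mul]
  have eb : μ * b + ν * b = b := by rw [← add_mul, hμν, one_mul]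
  have hz : μ * x + ν * y ∈ Ioo a b := by
    constructor
    · rcases eq_or_lt_of_le hx.1 with h | h
      · have h' : a < y := lt_of_le_of_ne hy.1 (h ▸ hxy)
        have h1 : μ * a ≤ μ * x := mul_le_mul_of_nonneg_left hx.1 hμ
        have h2 : ν * a < ν * y := mul_lt_mul_of_pos_left h' hνpos
        linarith
      · have h1 : μ * a < μ * x := mul_lt_mul_of_pos_left h hμpos
        have h2 : ν * a ≤ ν * y := mul_le_mul_of_nonneg_left hy.1 hν
        linarith
    · rcases eq_or_lt_of_le hx.2 with h | h
      · have h' : y < b := lt_of_le_of_ne hy.2 (by rw [← h]; exact fun e => hxy e.symm)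
        have h1 : μ * x ≤ μ * b := mul_le_mul_of_nonneg_left hx.2 hμ
        have h2 : ν * y < ν * b := mul_lt_mul_of_pos_left h' hνpos
        linarith
      · have h1 : μ * x < μ * b := mul_lt_mul_of_pos_left h hμpos
        have h2 : ν * y ≤ ν * b := mul_le_mul_of_nonneg_left hy.2 hν
        linarith
  obtain ⟨c, t, hct, hsup⟩ := exists_affine_support hab.le hF hz
  have l1 : c + t * x ≤ E x := affine_le_convEnv hab.le hF hct hx
  have l2 : c + t * y ≤ E y := affine_le_convEnv hab.le hF hct hy
  have e : c + t * (μ * x + ν * y) = μ * (c + t * x) + ν * (c + t * y) := by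
    linear_combination (-c) * hμν
  have hsup' : c + t * (μ * x + ν * y) = E (μ * x + ν * y) := hsup
  rw [← hsup', e]
  have := mul_le_mul_of_nonneg_left l1 hμ
  have := mul_le_mul_of_nonneg_left l2 hν
  linarith

lemma convEnv_continuousOn_Ioo (hab : a < b) (hF : ContinuousOn F (Icc a b)) :
    ContinuousOn (convEnv a b F) (Ioo a b) := by
  have h := (convEnv_convexOn hab hF).subset Ioo_subset_Icc_self (convex_Ioo a b)
  exact (h.locallyLipschitzOn isOpen_Ioo).continuousOn
/-- Right derivative of the envelope. -/
noncomputable def rdE (a b : ℝ) (F : ℝ → ℝ) : ℝ → ℝ :=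
  fun x => derivWithin (convEnv a b F) (Ioi x) x

lemma exists_hasDerivWithinAt_Ioi (hab : a < b) (hF : ContinuousOn F (Icc a b)) {x : ℝ}
    (hx : x ∈ Ioo a b) :
    HasDerivWithinAt (convEnv a b F) (rdE a b F x) (Ioi x) x := by
  set E := convEnv a b F with hE
  have hcx : ConvexOn ℝ (Icc a b) E := convEnv_convexOn hab hF
  have hxI : x ∈ Icc a b := Ioo_subset_Icc_self hx
  have hmono : MonotoneOn (slope E x) (Ioo x b) := by
    have h := hcx.slope_mono hxI
    exact h.mono (fun y hy => ⟨⟨by linarith [hx.1, hy.1], hy.2.le⟩, ne_of_gt hy.1⟩)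
  have hbdd : BddBelow (slope E x '' Ioo x b) := by
    refine ⟨slope E x a, ?_⟩
    rintro - ⟨y, hy, rfl⟩
    exact (hcx.slope_mono hxI) ⟨⟨le_refl _, hab.le⟩, ne_of_lt hx.1⟩
      ⟨⟨by linarith [hx.1, hy.1], hy.2.le⟩, ne_of_gt hy.1⟩ (by linarith [hx.1, hy.1])
  have hne : (Ioo x b).Nonempty := nonempty_Ioo.2 hx.2
  have htend : Tendsto (slope E x) (𝓝[>] x) (𝓝 (sInf (slope E x '' Ioo x b))) :=
    MonotoneOn.tendsto_nhdsWithin_Ioo_right hne hmono hbdd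
  have hd : HasDerivWithinAt E (sInf (slope E x '' Ioo x b)) (Ioi x) x := by
    rw [hasDerivWithinAt_iff_tendsto_slope' notMem_Ioi_self]
    exact htend
  have : rdE a b F x = sInf (slope E x '' Ioo x b) := hd.derivWithin (uniqueDiffWithinAt_Ioi x)
  rw [this]
  exact hd

lemma slope_le_rdE (hab : a < b) (hF : ContinuousOn F (Icc a b)) {x y : ℝ}
    (hx : x ∈ Icc a b) (hy : y ∈ Ioo a b) (hxy : x < y) :
    slope (convEnv a b F) x y ≤ rdE a b F y := by
  set E := convEnv a b F with hE
  have hcx : ConvexOn ℝ (Icc a b) E := convEnv_convexOn hab hF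
  have htend : Tendsto (slope E y) (𝓝[>] y) (𝓝 (rdE a b F y)) :=
    (hasDerivWithinAt_iff_tendsto_slope' notMem_Ioi_self).mp
      (exists_hasDerivWithinAt_Ioi hab hF hy)
  refine ge_of_tendsto htend ?_
  filter_upwards [Ioo_mem_nhdsGT_of_mem ⟨le_refl _, hy.2⟩] with z hz
  have h := hcx.slope_mono_adjacent hx (⟨by linarith [hy.1, hz.1], hz.2.le⟩ : z ∈ Icc a b)
    hxy hz.1
  rw [slope_def_field, slope_def_field]
  exact h

lemma rdE_le_slope (hab : a < b) (hF : ContinuousOn F (Icc a b)) {x y : ℝ}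
    (hx : x ∈ Ioo a b) (hy : y ∈ Icc a b) (hxy : x < y) :
    rdE a b F x ≤ slope (convEnv a b F) x y :=
  (convEnv_convexOn hab hF).le_slope_of_hasDerivWithinAt_Ioi (Ioo_subset_Icc_self hx) hy hxy
    (exists_hasDerivWithinAt_Ioi hab hF hx)

lemma rdE_monotoneOn (hab : a < b) (hF : ContinuousOn F (Icc a b)) :
    MonotoneOn (rdE a b F) (Ioo a b) := by
  intro x hx y hy hxy
  rcases eq_or_lt_of_le hxy with rfl | hlt
  · exact le_refl _
  calc rdE a b F x ≤ slope (convEnv a b F) x y :=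
        rdE_le_slope hab hF hx (Ioo_subset_Icc_self hy) hlt
    _ ≤ rdE a b F y := slope_le_rdE hab hF (Ioo_subset_Icc_self hx) hy hlt
lemma convEnv_continuousOn (hab : a < b) (hF : ContinuousOn F (Icc a b)) :
    ContinuousOn (convEnv a b F) (Icc a b) := by
  set E := convEnv a b F with hE
  obtain ⟨M, hM⟩ := isCompact_Icc.exists_bound_of_continuousOn hF
  set M' : ℝ := max M 1 with hM'def
  have hM'1 : (1:ℝ) ≤ M' := le_max_right _ _
  have hM'pos : (0:ℝ) < M' := lt_of_lt_of_le one_pos hM'1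
  have hM' : ∀ y ∈ Icc a b, |F y| ≤ M' := fun y hy =>
    le_trans (hM y hy) (le_max_left _ _)
  have hUC := isCompact_Icc.uniformContinuousOn_of_continuous hF
  rw [Metric.uniformContinuousOn_iff] at hUC
  have main : ∀ ε > (0:ℝ), ∃ δ > (0:ℝ),
      (∀ y z, y ∈ Icc a b → z ∈ Icc a b → dist y z < δ → dist (F y) (F z) < ε/8) ∧
      ∀ w p e, 0 ≤ w → w ≤ 1 → p ∈ Icc a b → e ∈ Icc a b → w * |p - e| < δ →
        -(ε/8) ≤ w * (F p - F e) := by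
    intro ε hε
    obtain ⟨δ₁, hδ₁pos, hδ₁⟩ := hUC (ε/8) (by linarith)
    refine ⟨min δ₁ (δ₁ * ε / (16 * M')), lt_min hδ₁pos (by positivity), ?_, ?_⟩
    · intro y z hy hz hyz
      exact hδ₁ y hy z hz (lt_of_lt_of_le hyz (min_le_left _ _))
    · intro w p e hw hw1 hp he hwd
      have hδa : min δ₁ (δ₁ * ε / (16 * M')) ≤ δ₁ := min_le_left _ _
      have hδb : min δ₁ (δ₁ * ε / (16 * M')) ≤ δ₁ * ε / (16 * M') := min_le_right _ _
      by_cases hpe : |p - e| < δ₁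
      · have hd : dist (F p) (F e) < ε/8 := hδ₁ p hp e he hpe
        rw [Real.dist_eq] at hd
        have h1 : -(ε/8) ≤ F p - F e := by linarith [(abs_le.1 hd.le).1]
        have h2 : w * (-(ε/8)) ≤ w * (F p - F e) := mul_le_mul_of_nonneg_left h1 hw
        nlinarith
      · push_neg at hpe
        have h1 : w * δ₁ ≤ w * |p - e| := mul_le_mul_of_nonneg_left hpe hw
        have h2 : w * δ₁ < δ₁ * ε / (16 * M') := lt_of_le_of_lt h1 (lt_of_lt_of_le hwd hδb)
        have h2' : w * δ₁ * (16 * M') < δ₁ * ε := by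
          have h16 : (0:ℝ) < 16 * M' := by positivity
          have := mul_lt_mul_of_pos_right h2 h16
          rwa [div_mul_cancel₀ _ (ne_of_gt h16)] at this
        have h3 : 16 * M' * w < ε := by nlinarith [hδ₁pos]
        have h4 : F p - F e ≥ -(2 * M') := by
          linarith [(abs_le.1 (hM' p hp)).1, (abs_le.1 (hM' e he)).2]
        have h5 : w * (-(2 * M')) ≤ w * (F p - F e) := mul_le_mul_of_nonneg_left h4 hw
        nlinarith
  intro x hx
  rcases eq_or_lt_of_le hx.1 with hxa | hxa
  · -- x = a
    subst hxa
    rw [Metric.continuousWithinAt_iff]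
    intro ε hε
    obtain ⟨δ, hδpos, hUCδ, hterm⟩ := main ε hε
    refine ⟨δ, hδpos, ?_⟩
    intro z hz hdz
    rw [Real.dist_eq] at hdz
    have hza : (0:ℝ) ≤ z - a := by linarith [hz.1]
    have hzd : z - a < δ := by rw [abs_of_nonneg hza] at hdz; exact hdz
    have hup : E z ≤ F z := convEnv_le_self hab.le hF hz
    have hFz : dist (F z) (F a) < ε/8 := hUCδ z a hz hx (by rw [Real.dist_eq]; exact hdz)
    have hlow : F a - ε/4 ≤ E z := by
      rw [hE, convEnv_def]
      refine le_csInf (chordSet_nonempty hab.le hz) ?_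
      intro y hy
      obtain ⟨lam, x₀, x₁, ⟨hl0, hl1⟩, h0, h1, hsum, rfl⟩ := hy
      have t1 : lam * (x₁ - a) ≥ 0 := mul_nonneg hl0 (by linarith [h1.1])
      have t0 : (1 - lam) * (x₀ - a) ≥ 0 := mul_nonneg (by linarith) (by linarith [h0.1])
      have e0 : (1 - lam) * |x₀ - a| < δ := by
        rw [abs_of_nonneg (by linarith [h0.1] : (0:ℝ) ≤ x₀ - a)]
        nlinarith [hsum]
      have e1 : lam * |x₁ - a| < δ := by
        rw [abs_of_nonneg (by linarith [h1.1] : (0:ℝ) ≤ x₁ - a)]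
        nlinarith [hsum]
      have b0 := hterm (1 - lam) x₀ a (by linarith) (by linarith) h0 hx e0
      have b1 := hterm lam x₁ a hl0 hl1 h1 hx e1
      nlinarith
    have hEa : E a = F a := convEnv_left hab.le hF
    rw [Real.dist_eq, hEa]
    rw [Real.dist_eq, abs_lt] at hFz
    rw [abs_lt]
    constructor <;> nlinarith
  rcases eq_or_lt_of_le hx.2 with hxb | hxb
  · -- x = x
    subst hxb
    rw [Metric.continuousWithinAt_iff]
    intro ε hε
    obtain ⟨δ, hδpos, hUCδ, hterm⟩ := main ε hε
    refine ⟨δ, hδpos, ?_⟩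
    intro z hz hdz
    rw [Real.dist_eq] at hdz
    have hzb : z - x ≤ 0 := by linarith [hz.2]
    have hzd : x - z < δ := by rw [abs_of_nonpos hzb] at hdz; linarith [hdz]
    have hup : E z ≤ F z := convEnv_le_self hab.le hF hz
    have hFz : dist (F z) (F x) < ε/8 := hUCδ z x hz hx (by rw [Real.dist_eq]; exact hdz)
    have hlow : F x - ε/4 ≤ E z := by
      rw [hE, convEnv_def]
      refine le_csInf (chordSet_nonempty hab.le hz) ?_
      intro y hy
      obtain ⟨lam, x₀, x₁, ⟨hl0, hl1⟩, h0, h1, hsum, rfl⟩ := hy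
      have t1 : lam * (x - x₁) ≥ 0 := mul_nonneg hl0 (by linarith [h1.2])
      have t0 : (1 - lam) * (x - x₀) ≥ 0 := mul_nonneg (by linarith) (by linarith [h0.2])
      have e0 : (1 - lam) * |x₀ - x| < δ := by
        rw [abs_of_nonpos (by linarith [h0.2] : x₀ - x ≤ 0)]
        nlinarith [hsum]
      have e1 : lam * |x₁ - x| < δ := by
        rw [abs_of_nonpos (by linarith [h1.2] : x₁ - x ≤ 0)]
        nlinarith [hsum]
      have b0 := hterm (1 - lam) x₀ x (by linarith) (by linarith) h0 hx e0
      have b1 := hterm lam x₁ x hl0 hl1 h1 hx e1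
      nlinarith
    have hEb : E x = F x := convEnv_right hab.le hF
    rw [Real.dist_eq, hEb]
    rw [Real.dist_eq, abs_lt] at hFz
    rw [abs_lt]
    constructor <;> nlinarith
  · exact ((convEnv_continuousOn_Ioo hab hF).continuousAt
      (isOpen_Ioo.mem_nhds ⟨hxa, hxb⟩)).continuousWithinAt
/-- approximating sequences -/
noncomputable def cseq (a b : ℝ) (n : ℕ) : ℝ := a + (b - a) / (n + 3)
noncomputable def dseq (a b : ℝ) (n : ℕ) : ℝ := b - (b - a) / (n + 3)

lemma cseq_mem (hab : a < b) (n : ℕ) :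
    a < cseq a b n ∧ cseq a b n < (a+b)/2 ∧ (a+b)/2 < dseq a b n ∧ dseq a b n < b := by
  have h3 : (0:ℝ) < (n:ℝ) + 3 := by positivity
  have h1 : 0 < (b - a) / (n + 3) := div_pos (by linarith) h3
  have h2 : (b - a) / (n + 3) < (b - a) / 2 := by
    apply div_lt_div_of_pos_left (by linarith) (by norm_num) (by linarith [Nat.cast_nonneg (α := ℝ) n])
  refine ⟨by simp only [cseq]; linarith, ?_, ?_, by simp only [dseq]; linarith⟩
  · simp only [cseq]; linarith
  · simp only [dseq]; linarith

lemma seq_tendsto (hab : a < b) :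
    Tendsto (cseq a b) atTop (𝓝 a) ∧ Tendsto (dseq a b) atTop (𝓝 b) := by
  have h : Tendsto (fun n : ℕ => (b - a) / (n + 3)) atTop (𝓝 0) := by
    apply Tendsto.div_atTop tendsto_const_nhds
    exact tendsto_atTop_add_const_right _ 3 tendsto_natCast_atTop_atTop
  constructor
  · show Tendsto (fun n : ℕ => a + (b - a) / (n + 3)) atTop (𝓝 a)
    simpa using tendsto_const_nhds.add h
  · show Tendsto (fun n : ℕ => b - (b - a) / (n + 3)) atTop (𝓝 b)
    simpa using tendsto_const_nhds.sub h

lemma seq_exists (hab : a < b) {x : ℝ} (hx : x ∈ Ioo a b) :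
    ∃ n : ℕ, x ∈ Ioo (cseq a b n) (dseq a b n) := by
  set ε := min (x - a) (b - x) with hεdef
  have hε : 0 < ε := lt_min (by linarith [hx.1]) (by linarith [hx.2])
  obtain ⟨n, hn⟩ := exists_nat_gt ((b - a) / ε)
  refine ⟨n, ?_, ?_⟩
  · have h1 : (b - a) < ε * (n + 3) := by
      rw [div_lt_iff₀ hε] at hn
      nlinarith [hε, Nat.cast_nonneg (α := ℝ) n]
    have h2 : (b - a) / (n + 3) < ε := by
      rw [div_lt_iff₀ (by positivity)]
      linarith
    have := min_le_left (x - a) (b - x)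
    simp only [cseq]
    linarith [h2, hεdef ▸ this]
  · have h1 : (b - a) < ε * (n + 3) := by
      rw [div_lt_iff₀ hε] at hn
      nlinarith [hε, Nat.cast_nonneg (α := ℝ) n]
    have h2 : (b - a) / (n + 3) < ε := by
      rw [div_lt_iff₀ (by positivity)]
      linarith
    have := min_le_right (x - a) (b - x)
    simp only [dseq]
    linarith [h2, hεdef ▸ this]

lemma rdE_integrableOn_Icc (hab : a < b) (hF : ContinuousOn F (Icc a b)) {c d : ℝ}
    (hc : a < c) (hd : d < b) :
    IntegrableOn (rdE a b F) (Icc c d) volume := by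
  rcases le_or_gt c d with hcd | hcd
  · exact MonotoneOn.integrableOn_isCompact isCompact_Icc
      (((rdE_monotoneOn hab hF)).mono (Icc_subset_Ioo hc hd))
  · rw [Icc_eq_empty (not_le.2 hcd)]
    exact integrableOn_empty

lemma rdE_ftc_sub (hab : a < b) (hF : ContinuousOn F (Icc a b)) {c d : ℝ}
    (hc : a < c) (hcd : c ≤ d) (hd : d < b) :
    ∫ x in c..d, rdE a b F x = convEnv a b F d - convEnv a b F c := by
  apply intervalIntegral.integral_eq_sub_of_hasDeriv_right_of_le hcd
  · exact (convEnv_continuousOn hab hF).mono (Icc_subset_Icc hc.le hd.le)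
  · intro x hx
    exact exists_hasDerivWithinAt_Ioi hab hF ⟨lt_of_lt_of_le hc hx.1.le, lt_of_le_of_lt hx.2.le hd⟩
  · rw [intervalIntegrable_iff_integrableOn_Icc_of_le hcd]
    exact rdE_integrableOn_Icc hab hF hc hd

lemma rdE_intervalIntegrable (hab : a < b) (hF : ContinuousOn F (Icc a b)) :
    IntervalIntegrable (rdE a b F) volume a b := by
  set m := (a+b)/2 with hmdef
  have hmIoo : m ∈ Ioo a b := ⟨by simp [hmdef]; linarith, by simp [hmdef]; linarith⟩
  obtain ⟨M, hM⟩ := isCompact_Icc.exists_bound_of_continuousOn (convEnv_continuousOn hab hF)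
  have hMnn : ∀ y ∈ Icc a b, |convEnv a b F y| ≤ M := hM
  set C : ℝ := 4 * |rdE a b F m| * (b - a) + 4 * M + 4 * M with hCdef
  have hbound : ∀ n : ℕ, (∫ x in Ioc (cseq a b n) (dseq a b n), ‖rdE a b F x‖) ≤ C := by
    intro n
    obtain ⟨h1, h2, h3, h4⟩ := cseq_mem hab n
    set c := cseq a b n
    set d := dseq a b n
    have hcd : c ≤ d := by linarith
    have hcm : c ≤ m := by rw [hmdef]; linarith
    have hmd : m ≤ d := by rw [hmdef]; linarith
    have hIcm : IntegrableOn (rdE a b F) (Icc c m) volume := rdE_integrableOn_Icc hab hF h1 hmIoo.2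
    have hImd : IntegrableOn (rdE a b F) (Icc m d) volume := rdE_integrableOn_Icc hab hF hmIoo.1 h4
    have hIIcm : IntervalIntegrable (rdE a b F) volume c m :=
      (intervalIntegrable_iff_integrableOn_Icc_of_le hcm).2 hIcm
    have hIImd : IntervalIntegrable (rdE a b F) volume m d :=
      (intervalIntegrable_iff_integrableOn_Icc_of_le hmd).2 hImd
    have e1 : (∫ x in Ioc c d, ‖rdE a b F x‖) = ∫ x in c..d, ‖rdE a b F x‖ := by
      rw [intervalIntegral.integral_of_le hcd]
    rw [e1, ← intervalIntegral.integral_add_adjacent_intervals hIIcm.norm hIImd.norm]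
    -- bound each piece
    have p1 : (∫ x in c..m, ‖rdE a b F x‖) ≤ ∫ x in c..m, ((|rdE a b F m| + rdE a b F m) - rdE a b F x) := by
      apply intervalIntegral.integral_mono_on hcm hIIcm.norm
      · exact (intervalIntegrable_const).sub hIIcm
      · intro x hx
        have hxm : rdE a b F x ≤ rdE a b F m := by
          rcases eq_or_lt_of_le hx.2 with h | h
          · rw [h]
          · exact (rdE_monotoneOn hab hF) ⟨lt_of_lt_of_le h1 hx.1, lt_trans h hmIoo.2⟩
              hmIoo hx.2
        rw [Real.norm_eq_abs, abs_le]
        constructor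
        · linarith [neg_abs_le (rdE a b F m)]
        · linarith [le_abs_self (rdE a b F m)]
    have p2 : (∫ x in m..d, ‖rdE a b F x‖) ≤ ∫ x in m..d, ((|rdE a b F m| - rdE a b F m) + rdE a b F x) := by
      apply intervalIntegral.integral_mono_on hmd hIImd.norm
      · exact (intervalIntegrable_const).add hIImd
      · intro x hx
        have hxm : rdE a b F m ≤ rdE a b F x := by
          rcases eq_or_lt_of_le hx.1 with h | h
          · rw [← h]
          · exact (rdE_monotoneOn hab hF) hmIoo ⟨lt_trans hmIoo.1 h, lt_of_le_of_lt hx.2 h4⟩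
              hx.1
        rw [Real.norm_eq_abs, abs_le]
        constructor
        · linarith [neg_abs_le (rdE a b F m)]
        · linarith [le_abs_self (rdE a b F m)]
    have v1 : (∫ x in c..m, ((|rdE a b F m| + rdE a b F m) - rdE a b F x))
        = (|rdE a b F m| + rdE a b F m) * (m - c) - (convEnv a b F m - convEnv a b F c) := by
      rw [intervalIntegral.integral_sub (by
          simpa using (intervalIntegrable_const (c := |rdE a b F m| + rdE a b F m))) hIIcm]
      · rw [rdE_ftc_sub hab hF h1 hcm hmIoo.2]
        simp [intervalIntegral.integral_const]
        ring
    have v2 : (∫ x in m..d, ((|rdE a b F m| - rdE a b F m) + rdE a b F x))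
        = (|rdE a b F m| - rdE a b F m) * (d - m) + (convEnv a b F d - convEnv a b F m) := by
      rw [intervalIntegral.integral_add (by
          simpa using (intervalIntegrable_const (c := |rdE a b F m| - rdE a b F m))) hIImd]
      · rw [rdE_ftc_sub hab hF hmIoo.1 hmd h4]
        simp [intervalIntegral.integral_const]
        ring
    have bm := abs_le.1 (hMnn m (Ioo_subset_Icc_self hmIoo))
    have bc := abs_le.1 (hMnn c ⟨h1.le, by linarith⟩)
    have bd := abs_le.1 (hMnn d ⟨by linarith, h4.le⟩)
    have habs1 : (0:ℝ) ≤ |rdE a b F m| + rdE a b F m := by linarith [neg_abs_le (rdE a b F m)]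
    have habs2 : (0:ℝ) ≤ |rdE a b F m| - rdE a b F m := by linarith [le_abs_self (rdE a b F m)]
    have hq1 : (|rdE a b F m| + rdE a b F m) * (m - c) ≤ (|rdE a b F m| + rdE a b F m) * (b - a) :=
      mul_le_mul_of_nonneg_left (by linarith) habs1
    have hq2 : (|rdE a b F m| - rdE a b F m) * (d - m) ≤ (|rdE a b F m| - rdE a b F m) * (b - a) :=
      mul_le_mul_of_nonneg_left (by linarith) habs2
    have habs3 : (|rdE a b F m| + rdE a b F m) * (b - a) + (|rdE a b F m| - rdE a b F m) * (b - a) = 2 * |rdE a b F m| * (b - a) := by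
      ring
    rw [hCdef]
    nlinarith [p1, p2, v1, v2]
  -- conclude
  have hfi : ∀ n : ℕ, IntegrableOn (rdE a b F) (Ioc (cseq a b n) (dseq a b n)) volume := by
    intro n
    obtain ⟨h1, h2, h3, h4⟩ := cseq_mem hab n
    exact (rdE_integrableOn_Icc hab hF h1 h4).mono_set Ioc_subset_Icc_self
  have hIoc : IntegrableOn (rdE a b F) (Ioc a b) volume :=
    integrableOn_Ioc_of_intervalIntegral_norm_bounded hfi (seq_tendsto hab).1
      (seq_tendsto hab).2 (Eventually.of_forall hbound)
  exact (intervalIntegrable_iff_integrableOn_Ioc_of_le hab.le).2 hIoc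

lemma rdE_integral (hab : a < b) (hF : ContinuousOn F (Icc a b)) :
    ∫ x in a..b, rdE a b F x = F b - F a := by
  rw [intervalIntegral.integral_eq_sub_of_hasDeriv_right_of_le hab.le
    (convEnv_continuousOn hab hF) (fun x hx => exists_hasDerivWithinAt_Ioi hab hF hx)
    (rdE_intervalIntegrable hab hF), convEnv_left hab.le hF, convEnv_right hab.le hF]

lemma ae_hasDerivAt_rdE (hab : a < b) (hF : ContinuousOn F (Icc a b)) :
    ∀ᵐ x ∂(volume : Measure ℝ), x ∈ Ioo a b → HasDerivAt (convEnv a b F) (rdE a b F x) x := by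
  set E := convEnv a b F with hEdef
  have hcx : ConvexOn ℝ (Icc a b) E := convEnv_convexOn hab hF
  have per : ∀ n : ℕ, ∀ᵐ x ∂(volume : Measure ℝ),
      x ∈ Ioo (cseq a b n) (dseq a b n) → HasDerivAt E (rdE a b F x) x := by
    intro n
    obtain ⟨h1, h2, h3, h4⟩ := cseq_mem hab n
    set c := cseq a b n
    set d := dseq a b n
    have hcd : c < d := by linarith
    set L : ℝ := slope E a c with hLdef
    set K : ℝ := max 0 (-L) with hKdef
    have hKL : -L ≤ K := le_max_right _ _
    have monoK : MonotoneOn (fun y => E y + K * y) (Icc c d) := by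
      intro x hx y hy hxy
      rcases eq_or_lt_of_le hxy with rfl | hlt
      · exact le_refl _
      have hxI : x ∈ Icc a b := ⟨by linarith [hx.1], by linarith [hx.2]⟩
      have hyI : y ∈ Icc a b := ⟨by linarith [hy.1], by linarith [hy.2]⟩
      have hax : a < x := lt_of_lt_of_le h1 hx.1
      have s1 : (E x - E a) / (x - a) ≤ (E y - E x) / (y - x) :=
        hcx.slope_mono_adjacent (left_mem_Icc.2 hab.le) hyI hax hlt
      have s2 : slope E a c ≤ slope E a x := by
        apply hcx.slope_mono (left_mem_Icc.2 hab.le)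
        · exact ⟨⟨h1.le, by linarith⟩, ne_of_gt h1⟩
        · exact ⟨hxI, ne_of_gt hax⟩
        · exact hx.1
      rw [slope_def_field, slope_def_field] at s2
      have hyx : (0:ℝ) < y - x := by linarith
      have s3 : L * (y - x) ≤ E y - E x := by
        rw [hLdef]
        rw [slope_def_field]
        calc (E c - E a)/(c - a) * (y - x) ≤ (E y - E x)/(y - x) * (y - x) := by
              apply mul_le_mul_of_nonneg_right (le_trans s2 s1) hyx.le
          _ = E y - E x := by field_simp
      simp only
      nlinarith [s3, mul_le_mul_of_nonneg_right hKL hyx.le]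
    have hdiff := monoK.ae_differentiableWithinAt (measurableSet_Icc : MeasurableSet (Icc c d))
    rw [ae_restrict_iff' measurableSet_Icc] at hdiff
    filter_upwards [hdiff] with x hdx hxmem
    have h1' : DifferentiableWithinAt ℝ (fun y => E y + K * y) (Icc c d) x :=
      hdx (Ioo_subset_Icc_self hxmem)
    have h2' : DifferentiableWithinAt ℝ E (Icc c d) x := by
      have he : E = fun y => (E y + K * y) - K * y := by funext y; ring
      rw [he]
      exact h1'.sub ((differentiableWithinAt_id.const_mul K))
    have h3' : DifferentiableAt ℝ E x := h2'.differentiableAt (Icc_mem_nhds hxmem.1 hxmem.2)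
    have h4' : rdE a b F x = deriv E x :=
      (h3'.hasDerivAt.hasDerivWithinAt).derivWithin (uniqueDiffWithinAt_Ioi x)
    rw [h4']
    exact h3'.hasDerivAt
  have hall := ae_all_iff.2 per
  filter_upwards [hall] with x hx hxIoo
  obtain ⟨n, hn⟩ := seq_exists hab hxIoo
  exact hx n hn
/-- The key comparison: if `G - F` is "nondecreasing" then at common differentiability
points the envelope derivatives compare. -/
lemma deriv_comparison (hab : a < b) (hF : ContinuousOn F (Icc a b))
    (hG : ContinuousOn G (Icc a b))
    (hmono : ∀ x ∈ Icc a b, ∀ y ∈ Icc a b, x ≤ y → F y - F x ≤ G y - G x)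
    {x₀ u v : ℝ} (hx₀ : x₀ ∈ Ioo a b)
    (hu : HasDerivAt (convEnv a b F) u x₀) (hv : HasDerivAt (convEnv a b G) v x₀) :
    u ≤ v := by
  by_contra hcon
  push_neg at hcon
  set t₁ : ℝ := v + (u - v)/4 with ht₁
  set t₂ : ℝ := u - (u - v)/4 with ht₂
  have ht₁v : v < t₁ := by rw [ht₁]; linarith
  have ht₂u : t₂ < u := by rw [ht₂]; linarith
  have ht12 : t₁ < t₂ := by rw [ht₁, ht₂]; linarith
  have hx₀I : x₀ ∈ Icc a b := Ioo_subset_Icc_self hx₀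
  -- minimizer of F - t₂ * id
  obtain ⟨p, hpI, hpmin⟩ := isCompact_Icc.exists_isMinOn (nonempty_Icc.2 hab.le)
    (hF.sub (continuousOn_const.mul continuousOn_id) : ContinuousOn (fun y => F y - t₂ * y) _)
  obtain ⟨q, hqI, hqmin⟩ := isCompact_Icc.exists_isMinOn (nonempty_Icc.2 hab.le)
    (hG.sub (continuousOn_const.mul continuousOn_id) : ContinuousOn (fun y => G y - t₁ * y) _)
  have hpmin' : ∀ y ∈ Icc a b, F p - t₂ * p ≤ F y - t₂ * y := fun y hy => hpmin hy
  have hqmin' : ∀ y ∈ Icc a b, G q - t₁ * q ≤ G y - t₁ * y := fun y hy => hqmin hy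
  -- affine minorants through the minimizers
  have affF : ∀ y ∈ Icc a b, (F p - t₂ * p) + t₂ * y ≤ F y := by
    intro y hy; linarith [hpmin' y hy]
  have affG : ∀ y ∈ Icc a b, (G q - t₁ * q) + t₁ * y ≤ G y := by
    intro y hy; linarith [hqmin' y hy]
  -- p ≤ x₀
  have hpx : p ≤ x₀ := by
    by_contra hc
    push_neg at hc
    have s1 : u ≤ slope (convEnv a b F) x₀ p :=
      (convEnv_convexOn hab hF).le_slope_of_hasDerivAt hx₀I hpI hc hu
    rw [slope_def_field] at s1
    have hpx₀ : (0:ℝ) < p - x₀ := by linarith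
    have s1' : u * (p - x₀) ≤ convEnv a b F p - convEnv a b F x₀ := by
      calc u * (p - x₀) ≤ (convEnv a b F p - convEnv a b F x₀) / (p - x₀) * (p - x₀) :=
            mul_le_mul_of_nonneg_right s1 hpx₀.le
        _ = _ := by field_simp
    have b1 : (F p - t₂ * p) + t₂ * x₀ ≤ convEnv a b F x₀ :=
      affine_le_convEnv hab.le hF affF hx₀I
    have b2 : convEnv a b F p ≤ F p := convEnv_le_self hab.le hF hpI
    nlinarith
  -- x₀ ≤ q
  have hqx : x₀ ≤ q := by
    by_contra hc
    push_neg at hc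
    have s2 : slope (convEnv a b G) q x₀ ≤ v :=
      (convEnv_convexOn hab hG).slope_le_of_hasDerivAt hqI hx₀I hc hv
    rw [slope_def_field] at s2
    have hqx₀ : (0:ℝ) < x₀ - q := by linarith
    have s2' : convEnv a b G x₀ - convEnv a b G q ≤ v * (x₀ - q) := by
      calc convEnv a b G x₀ - convEnv a b G q
          = (convEnv a b G x₀ - convEnv a b G q) / (x₀ - q) * (x₀ - q) := by field_simp
        _ ≤ v * (x₀ - q) := mul_le_mul_of_nonneg_right s2 hqx₀.le
    have b1 : (G q - t₁ * q) + t₁ * x₀ ≤ convEnv a b G x₀ :=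
      affine_le_convEnv hab.le hG affG hx₀I
    have b2 : convEnv a b G q ≤ G q := convEnv_le_self hab.le hG hqI
    nlinarith
  -- combined: p = q = x₀
  have hFq : F p - t₂ * p ≤ F q - t₂ * q := hpmin' q hqI
  have hGp : G q - t₁ * q ≤ G p - t₁ * p := hqmin' p hpI
  have hDm : F q - F p ≤ G q - G p := hmono p hpI q hqI (le_trans hpx hqx)
  have hqp : q ≤ p := by nlinarith
  have hpq : p = x₀ := le_antisymm hpx (le_trans hqx hqp)
  have hqq : q = x₀ := le_antisymm (hqp.trans (hpq.le)) hqx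
  -- final contradiction : x₀ is a minimizer of F - t₂ id but the left slope exceeds t₂
  -- get y < x₀ with slope > t₂
  have htends : Tendsto (slope (convEnv a b F) x₀) (𝓝[<] x₀) (𝓝 u) := by
    have h := (hasDerivWithinAt_iff_tendsto_slope' (notMem_Iio_self : x₀ ∉ Iio x₀)).mp
      hu.hasDerivWithinAt
    exact h
  have hev : ∀ᶠ y in 𝓝[<] x₀, slope (convEnv a b F) x₀ y > t₂ :=
    htends.eventually (eventually_gt_nhds ht₂u)
  have hev2 : ∀ᶠ y in 𝓝[<] x₀, y ∈ Ioo a x₀ :=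
    Ioo_mem_nhdsLT_of_mem ⟨hx₀.1, le_refl _⟩
  obtain ⟨y, hy1, hy2⟩ := (hev.and hev2).exists
  rw [slope_comm, slope_def_field] at hy1
  have hyx₀ : (0:ℝ) < x₀ - y := by linarith [hy2.2]
  have hy3 : convEnv a b F x₀ - convEnv a b F y > t₂ * (x₀ - y) := by
    have := mul_lt_mul_of_pos_right hy1 hyx₀
    calc t₂ * (x₀ - y) < (convEnv a b F x₀ - convEnv a b F y) / (x₀ - y) * (x₀ - y) := this
      _ = _ := by field_simp
  have hyI : y ∈ Icc a b := ⟨hy2.1.le, by linarith [hx₀.2, hy2.2]⟩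
  have b1 : (F p - t₂ * p) + t₂ * y ≤ convEnv a b F y :=
    affine_le_convEnv hab.le hF affF hyI
  have b2 : convEnv a b F x₀ ≤ F x₀ := convEnv_le_self hab.le hF hx₀I
  rw [hpq] at b1
  nlinarith

lemma Tcv_eventuallyEq (hab : a < b) (hF : ContinuousOn F (Icc a b)) :
    derivWithin (convEnv a b F) (Icc a b) =ᵐ[volume.restrict (Ioo a b)] rdE a b F := by
  filter_upwards [(ae_hasDerivAt_rdE hab hF).filter_mono
    (ae_mono Measure.restrict_le_self), ae_restrict_mem measurableSet_Ioo]
    with x hP hmem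
  exact (hP hmem).hasDerivWithinAt.derivWithin (uniqueDiffOn_Icc hab x (Ioo_subset_Icc_self hmem))

lemma rdE_integrable_restrict (hab : a < b) (hF : ContinuousOn F (Icc a b)) :
    Integrable (rdE a b F) (volume.restrict (Ioo a b)) :=
  ((intervalIntegrable_iff_integrableOn_Ioc_of_le hab.le).1
    (rdE_intervalIntegrable hab hF)).mono_set Ioo_subset_Ioc_self

lemma Tcv_integrable (hab : a < b) (hF : ContinuousOn F (Icc a b)) :
    Integrable (derivWithin (convEnv a b F) (Icc a b)) (volume.restrict (Ioo a b)) :=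
  (rdE_integrable_restrict hab hF).congr (Tcv_eventuallyEq hab hF).symm

lemma Tcv_integral (hab : a < b) (hF : ContinuousOn F (Icc a b)) :
    ∫ x in Ioo a b, derivWithin (convEnv a b F) (Icc a b) x = F b - F a := by
  rw [integral_congr_ae (Tcv_eventuallyEq hab hF)]
  have e : (volume : Measure ℝ).restrict (Ioo a b) = volume.restrict (Ioc a b) :=
    Measure.restrict_congr_set Ioo_ae_eq_Ioc
  rw [e, ← intervalIntegral.integral_of_le hab.le, rdE_integral hab hF]

lemma Tcv_le_ae (hab : a < b) (hF : ContinuousOn F (Icc a b)) (hG : ContinuousOn G (Icc a b))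
    (hmono : ∀ x ∈ Icc a b, ∀ y ∈ Icc a b, x ≤ y → F y - F x ≤ G y - G x) :
    derivWithin (convEnv a b F) (Icc a b) ≤ᵐ[volume.restrict (Ioo a b)]
      derivWithin (convEnv a b G) (Icc a b) := by
  filter_upwards [Tcv_eventuallyEq hab hF, Tcv_eventuallyEq hab hG,
    (ae_hasDerivAt_rdE hab hF).filter_mono (ae_mono Measure.restrict_le_self),
    (ae_hasDerivAt_rdE hab hG).filter_mono (ae_mono Measure.restrict_le_self),
    ae_restrict_mem measurableSet_Ioo] with x e1 e2 d1 d2 hmem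
  rw [e1, e2]
  exact deriv_comparison hab hF hG hmono hmem (d1 hmem) (d2 hmem)

lemma primit_continuousOn (hab : a < b) {f : ℝ → ℝ} (hf : IntervalIntegrable f volume a b) :
    ContinuousOn (primit a f) (Icc a b) := by
  have h : IntegrableOn f (uIcc a b) volume := by
    rw [uIcc_of_le hab.le]
    exact (intervalIntegrable_iff_integrableOn_Icc_of_le hab.le).1 hf
  have h2 := intervalIntegral.continuousOn_primitive_interval (μ := volume) (a := a) (b := b) h
  rw [uIcc_of_le hab.le] at h2
  exact h2

lemma primit_mono_aux (hab : a < b) {f h : ℝ → ℝ} (hf : IntervalIntegrable f volume a b)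
    (hh : IntervalIntegrable h volume a b) (hle : ∀ x, f x ≤ h x) :
    ∀ x ∈ Icc a b, ∀ y ∈ Icc a b, x ≤ y →
      primit a f y - primit a f x ≤ primit a h y - primit a h x := by
  intro x hx y hy hxy
  have hsub : ∀ {u v : ℝ}, u ∈ Icc a b → v ∈ Icc a b →
      ∀ {φ : ℝ → ℝ}, IntervalIntegrable φ volume a b → IntervalIntegrable φ volume u v := by
    intro u v hu hv φ hφ
    apply hφ.mono_set
    rw [uIcc_of_le hab.le]
    exact uIcc_subset_Icc hu hv
  have e1 : primit a f y - primit a f x = ∫ t in x..y, f t :=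
    intervalIntegral.integral_interval_sub_left (hsub (left_mem_Icc.2 hab.le) hy hf)
      (hsub (left_mem_Icc.2 hab.le) hx hf)
  have e2 : primit a h y - primit a h x = ∫ t in x..y, h t :=
    intervalIntegral.integral_interval_sub_left (hsub (left_mem_Icc.2 hab.le) hy hh)
      (hsub (left_mem_Icc.2 hab.le) hx hh)
  rw [e1, e2]
  exact intervalIntegral.integral_mono_on hxy (hsub hx hy hf) (hsub hx hy hh)
    (fun t _ => hle t)

end TcvAux

open TcvAux

/-- `‖Tf - Tg‖_{L¹(a,b)} ≤ ‖f - g‖_{L¹(a,b)}` for `f, g ∈ L¹(a,b)`. -/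
theorem Tcv_L1_contraction (a b : ℝ) (hab : a < b) (f g : ℝ → ℝ)
    (hf : IntervalIntegrable f MeasureTheory.volume a b)
    (hg : IntervalIntegrable g MeasureTheory.volume a b) :
    (∫ x in a..b, |Tcv a b f x - Tcv a b g x|) ≤ ∫ x in a..b, |f x - g x| := by
  classical
  set h : ℝ → ℝ := fun x => max (f x) (g x) with hh_def
  have hh : IntervalIntegrable h volume a b := ⟨hf.1.sup hg.1, hf.2.sup hg.2⟩
  have hfc : ContinuousOn (primit a f) (Icc a b) := primit_continuousOn hab hf
  have hgc : ContinuousOn (primit a g) (Icc a b) := primit_continuousOn hab hg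
  have hhc : ContinuousOn (primit a h) (Icc a b) := primit_continuousOn hab hh
  -- comparisons
  have cmpf : derivWithin (convEnv a b (primit a f)) (Icc a b) ≤ᵐ[volume.restrict (Ioo a b)]
      derivWithin (convEnv a b (primit a h)) (Icc a b) :=
    Tcv_le_ae hab hfc hhc (primit_mono_aux hab hf hh (fun x => le_max_left _ _))
  have cmpg : derivWithin (convEnv a b (primit a g)) (Icc a b) ≤ᵐ[volume.restrict (Ioo a b)]
      derivWithin (convEnv a b (primit a h)) (Icc a b) :=
    Tcv_le_ae hab hgc hhc (primit_mono_aux hab hg hh (fun x => le_max_right _ _))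
  have iTf := Tcv_integrable hab hfc
  have iTg := Tcv_integrable hab hgc
  have iTh := Tcv_integrable hab hhc
  -- the interval integrals as set integrals over Ioo
  have erestrict : (volume : Measure ℝ).restrict (Ioo a b) = volume.restrict (Ioc a b) :=
    Measure.restrict_congr_set Ioo_ae_eq_Ioc
  have lhs_eq : (∫ x in a..b, |Tcv a b f x - Tcv a b g x|)
      = ∫ x in Ioo a b, |Tcv a b f x - Tcv a b g x| := by
    rw [intervalIntegral.integral_of_le hab.le, ← erestrict]
  -- pointwise bound
  have hbound : (fun x => |Tcv a b f x - Tcv a b g x|) ≤ᵐ[volume.restrict (Ioo a b)]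
      fun x => (Tcv a b h x - Tcv a b f x) + (Tcv a b h x - Tcv a b g x) := by
    filter_upwards [cmpf, cmpg] with x l1 l2
    have l1' : Tcv a b f x ≤ Tcv a b h x := l1
    have l2' : Tcv a b g x ≤ Tcv a b h x := l2
    exact abs_sub_le_iff.2 ⟨by linarith, by linarith⟩
  have ibound : Integrable (fun x => |Tcv a b f x - Tcv a b g x|)
      (volume.restrict (Ioo a b)) := (iTf.sub iTg).abs
  have ibound2 : Integrable (fun x => (Tcv a b h x - Tcv a b f x) + (Tcv a b h x - Tcv a b g x))
      (volume.restrict (Ioo a b)) := (iTh.sub iTf).add (iTh.sub iTg)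
  have step1 : (∫ x in Ioo a b, |Tcv a b f x - Tcv a b g x|)
      ≤ ∫ x in Ioo a b, ((Tcv a b h x - Tcv a b f x) + (Tcv a b h x - Tcv a b g x)) :=
    integral_mono_ae ibound ibound2 hbound
  -- compute the RHS integral value
  have vTf : (∫ x in Ioo a b, Tcv a b f x) = ∫ y in a..b, f y := by
    rw [show Tcv a b f = derivWithin (convEnv a b (primit a f)) (Icc a b) from rfl,
      Tcv_integral hab hfc]
    simp [primit, intervalIntegral.integral_same]
  have vTg : (∫ x in Ioo a b, Tcv a b g x) = ∫ y in a..b, g y := by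
    rw [show Tcv a b g = derivWithin (convEnv a b (primit a g)) (Icc a b) from rfl,
      Tcv_integral hab hgc]
    simp [primit, intervalIntegral.integral_same]
  have vTh : (∫ x in Ioo a b, Tcv a b h x) = ∫ y in a..b, h y := by
    rw [show Tcv a b h = derivWithin (convEnv a b (primit a h)) (Icc a b) from rfl,
      Tcv_integral hab hhc]
    simp [primit, intervalIntegral.integral_same]
  have step2 : (∫ x in Ioo a b, ((Tcv a b h x - Tcv a b f x) + (Tcv a b h x - Tcv a b g x)))
      = ((∫ y in a..b, h y) - ∫ y in a..b, f y) + ((∫ y in a..b, h y) - ∫ y in a..b, g y) := by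
    have iA : Integrable (fun x => Tcv a b h x - Tcv a b f x) (volume.restrict (Ioo a b)) :=
      iTh.sub iTf
    have iB : Integrable (fun x => Tcv a b h x - Tcv a b g x) (volume.restrict (Ioo a b)) :=
      iTh.sub iTg
    have iTf' : Integrable (fun x => Tcv a b f x) (volume.restrict (Ioo a b)) := iTf
    have iTg' : Integrable (fun x => Tcv a b g x) (volume.restrict (Ioo a b)) := iTg
    have iTh' : Integrable (fun x => Tcv a b h x) (volume.restrict (Ioo a b)) := iTh
    rw [integral_add iA iB, integral_sub iTh' iTf', integral_sub iTh' iTg']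
    rw [show (∫ x in Ioo a b, Tcv a b f x) = ∫ y in a..b, f y from vTf,
      show (∫ x in Ioo a b, Tcv a b g x) = ∫ y in a..b, g y from vTg,
      show (∫ x in Ioo a b, Tcv a b h x) = ∫ y in a..b, h y from vTh]
  -- compute the RHS of the statement
  have rhs_eq : (∫ x in a..b, |f x - g x|)
      = ((∫ y in a..b, h y) - ∫ y in a..b, f y) + ((∫ y in a..b, h y) - ∫ y in a..b, g y) := by
    have hpt : ∀ x, |f x - g x| = (h x - f x) + (h x - g x) := by
      intro x
      rcases le_total (f x) (g x) with hle | hle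
      · rw [hh_def]
        simp only [max_eq_right hle]
        rw [abs_of_nonpos (by linarith)]
        ring
      · rw [hh_def]
        simp only [max_eq_left hle]
        rw [abs_of_nonneg (by linarith)]
        ring
    rw [intervalIntegral.integral_congr (g := fun x => (h x - f x) + (h x - g x))
      (fun x _ => hpt x)]
    rw [intervalIntegral.integral_add (hh.sub hf) (hh.sub hg),
      intervalIntegral.integral_sub hh hf, intervalIntegral.integral_sub hh hg]
  rw [lhs_eq, rhs_eq]
  calc (∫ x in Ioo a b, |Tcv a b f x - Tcv a b g x|)
      ≤ ∫ x in Ioo a b, ((Tcv a b h x - Tcv a b f x) + (Tcv a b h x - Tcv a b g x)) := step1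
    _ = _ := step2
end

section
/- Let f : [a,b] → ℝ be continuous and F(x) := ∫_a^x f(y) dy. Then for x ∈ (a,b) one has F(x) = F**(x) if and only if ∫_x^y (f(s) − f(x)) ds ≥ 0 for all y ∈ [a,b]; equivalently, the contact set K_F := {x ∈ (a,b) : F(x) = F**(x)} equals {x ∈ (a,b) : F(y) − F(x) − (y−x)F'(x) ≥ 0 for all y ∈ [a,b]}. -/
open Set MeasureTheory Filter Topology

/-- Characterization of the contact set `K_F = {x ∈ (a,b) : F(x) = F**(x)}`:
`x ∈ K_F` iff `∫_x^y (f(s) - f(x)) ds ≥ 0` for all `y ∈ [a,b]`, equivalently iff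
`F(y) - F(x) - (y-x) F'(x) ≥ 0` for all `y ∈ [a,b]` (here `F' = f`). -/
theorem contact_set_characterization (a b : ℝ) (hab : a < b) (f : ℝ → ℝ)
    (hf : ContinuousOn f (Set.Icc a b)) :
    ∀ x ∈ Set.Ioo a b,
      (primit a f x = convEnv a b (primit a f) x ↔
        ∀ y ∈ Set.Icc a b, 0 ≤ ∫ s in x..y, (f s - f x)) ∧
      (primit a f x = convEnv a b (primit a f) x ↔
        ∀ y ∈ Set.Icc a b, 0 ≤ primit a f y - primit a f x - (y - x) * f x) := by
  intro x hx
  have hxI : x ∈ Set.Icc a b := Set.Ioo_subset_Icc_self hx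
  set F := primit a f with hFdef
  have haI : a ∈ Set.Icc a b := Set.left_mem_Icc.mpr hab.le
  -- integrability
  have hInt : ∀ u ∈ Set.Icc a b, ∀ v ∈ Set.Icc a b, IntervalIntegrable f volume u v :=
    fun u hu v hv => (hf.mono (Set.uIcc_subset_Icc hu hv)).intervalIntegrable
  -- F y - F x = ∫ x..y f
  have hsub : ∀ y ∈ Set.Icc a b, F y - F x = ∫ s in x..y, f s := by
    intro y hy
    exact intervalIntegral.integral_interval_sub_left (hInt a haI y hy) (hInt a haI x hxI)
  -- the two right-hand sides agree
  have hid : ∀ y ∈ Set.Icc a b,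
      (∫ s in x..y, (f s - f x)) = F y - F x - (y - x) * f x := by
    intro y hy
    rw [intervalIntegral.integral_sub (hInt x hxI y hy) intervalIntegrable_const,
      intervalIntegral.integral_const, ← hsub y hy, smul_eq_mul]
  -- derivative of F at x is f x
  have hderiv : HasDerivAt F (f x) x := by
    have hcont : ContinuousAt f x := hf.continuousAt (Icc_mem_nhds hx.1 hx.2)
    have hmeas : StronglyMeasurableAtFilter f (𝓝 x) :=
      ⟨Set.Ioo a b, Ioo_mem_nhds hx.1 hx.2,
        (hf.mono Set.Ioo_subset_Icc_self).aestronglyMeasurable measurableSet_Ioo⟩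
    exact intervalIntegral.integral_hasDerivAt_right (hInt a haI x hxI) hmeas hcont
  -- continuity of F on [a,b] and boundedness below of the chord set
  have hFcont : ContinuousOn F (Set.Icc a b) := by
    have h1 : IntegrableOn f (Set.uIcc a b) volume := by
      rw [Set.uIcc_of_le hab.le]
      exact hf.integrableOn_Icc
    have := intervalIntegral.continuousOn_primitive_interval (a := a) (b := b) h1
    rwa [Set.uIcc_of_le hab.le] at this
  obtain ⟨z, hz, hzmin⟩ :=
    isCompact_Icc.exists_isMinOn (Set.nonempty_Icc.mpr hab.le) hFcont
  set S := {y : ℝ | ∃ lam x₀ x₁ : ℝ, lam ∈ Set.Icc (0:ℝ) 1 ∧ x₀ ∈ Set.Icc a b ∧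
    x₁ ∈ Set.Icc a b ∧ (1 - lam) * x₀ + lam * x₁ = x ∧
    y = (1 - lam) * F x₀ + lam * F x₁} with hSdef
  have hconv : convEnv a b F x = sInf S := rfl
  have hmem : F x ∈ S := ⟨0, x, x, by norm_num, hxI, hxI, by ring, by ring⟩
  have hbdd : BddBelow S := by
    refine ⟨F z, ?_⟩
    rintro y ⟨lam, x₀, x₁, hlam, h0, h1, -, rfl⟩
    nlinarith [isMinOn_iff.mp hzmin x₀ h0, isMinOn_iff.mp hzmin x₁ h1, hlam.1, hlam.2]
  -- key reformulation of F x = F** x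
  have hkey : (F x = convEnv a b F x) ↔
      (∀ lam x₀ x₁ : ℝ, lam ∈ Set.Icc (0:ℝ) 1 → x₀ ∈ Set.Icc a b → x₁ ∈ Set.Icc a b →
        (1 - lam) * x₀ + lam * x₁ = x → F x ≤ (1 - lam) * F x₀ + lam * F x₁) := by
    constructor
    · intro h lam x₀ x₁ hlam h0 h1 hc
      rw [h, hconv]
      exact csInf_le hbdd ⟨lam, x₀, x₁, hlam, h0, h1, hc, rfl⟩
    · intro h
      refine le_antisymm ?_ (csInf_le hbdd hmem)
      refine le_csInf ⟨F x, hmem⟩ ?_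
      rintro y ⟨lam, x₀, x₁, hlam, h0, h1, hc, rfl⟩
      exact h lam x₀ x₁ hlam h0 h1 hc
  -- slope limit
  have hslope : Tendsto (slope F x) (𝓝[≠] x) (𝓝 (f x)) :=
    hasDerivAt_iff_tendsto_slope.mp hderiv
  -- forward: chord condition ⇒ supporting-line condition
  have hforward : (∀ lam x₀ x₁ : ℝ, lam ∈ Set.Icc (0:ℝ) 1 → x₀ ∈ Set.Icc a b →
        x₁ ∈ Set.Icc a b → (1 - lam) * x₀ + lam * x₁ = x →
        F x ≤ (1 - lam) * F x₀ + lam * F x₁) →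
      ∀ y ∈ Set.Icc a b, 0 ≤ F y - F x - (y - x) * f x := by
    intro hcombo y hy
    rcases lt_trichotomy y x with hyx | hyx | hyx
    · -- y < x : use points t ∈ (x, b)
      have hev : ∀ᶠ t in 𝓝[>] x, (F x - F y) / (x - y) ≤ slope F x t := by
        filter_upwards [Ioo_mem_nhdsGT hx.2] with t ht
        have htx : x < t := ht.1
        have htb : t ≤ b := ht.2.le
        have hty : y < t := hyx.trans htx
        have htyne : t - y ≠ 0 := sub_ne_zero.mpr hty.ne'
        set lam := (x - y) / (t - y) with hlamdef
        have hlam : lam ∈ Set.Icc (0:ℝ) 1 := by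
          constructor
          · exact div_nonneg (by linarith) (by linarith)
          · rw [div_le_one (by linarith)]; linarith
        have hc : (1 - lam) * y + lam * t = x := by
          rw [hlamdef]; field_simp; ring
        have h := hcombo lam y t hlam hy ⟨hx.1.le.trans htx.le, htb⟩ hc
        have e1 : lam * (t - y) = x - y := by
          rw [hlamdef]; field_simp
        have e2 : (1 - lam) * (t - y) = t - x := by
          rw [hlamdef]; field_simp; ring
        have h2 := mul_le_mul_of_nonneg_left h (by linarith : (0:ℝ) ≤ t - y)
        have e3 : (t - y) * ((1 - lam) * F y + lam * F t)
            = (t - x) * F y + (x - y) * F t := by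
          linear_combination F y * e2 + F t * e1
        rw [e3] at h2
        rw [slope_def_field,
          div_le_div_iff₀ (by linarith : (0:ℝ) < x - y) (by linarith : (0:ℝ) < t - x)]
        nlinarith [h2]
      have hle : (F x - F y) / (x - y) ≤ f x :=
        ge_of_tendsto (hslope.mono_left (nhdsWithin_mono x
          (fun t ht => Set.mem_compl_singleton_iff.mpr (ne_of_gt ht) :
            Set.Ioi x ⊆ {x}ᶜ))) hev
      have h3 := (div_le_iff₀ (by linarith : (0:ℝ) < x - y)).mp hle
      nlinarith [h3]
    · simp [hyx]
    · -- y > x : use points t ∈ (a, x)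
      have hev : ∀ᶠ t in 𝓝[<] x, slope F x t ≤ (F y - F x) / (y - x) := by
        filter_upwards [Ioo_mem_nhdsLT hx.1] with t ht
        have htx : t < x := ht.2
        have hta : a ≤ t := ht.1.le
        have hty : t < y := htx.trans hyx
        have htyne : y - t ≠ 0 := sub_ne_zero.mpr hty.ne'
        set lam := (x - t) / (y - t) with hlamdef
        have hlam : lam ∈ Set.Icc (0:ℝ) 1 := by
          constructor
          · exact div_nonneg (by linarith) (by linarith)
          · rw [div_le_one (by linarith)]; linarith
        have hc : (1 - lam) * t + lam * y = x := by
          rw [hlamdef]; field_simp; ring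
        have h := hcombo lam t y hlam ⟨hta, htx.le.trans hx.2.le⟩ hy hc
        have e1 : lam * (y - t) = x - t := by
          rw [hlamdef]; field_simp
        have e2 : (1 - lam) * (y - t) = y - x := by
          rw [hlamdef]; field_simp; ring
        have h2 := mul_le_mul_of_nonneg_left h (by linarith : (0:ℝ) ≤ y - t)
        have e3 : (y - t) * ((1 - lam) * F t + lam * F y)
            = (y - x) * F t + (x - t) * F y := by
          linear_combination F t * e2 + F y * e1
        rw [e3] at h2
        rw [slope_def_field,
          show (F t - F x) / (t - x) = (F x - F t) / (x - t) by
            rw [show F t - F x = -(F x - F t) by ring,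
              show t - x = -(x - t) by ring, neg_div_neg_eq],
          div_le_div_iff₀ (by linarith : (0:ℝ) < x - t) (by linarith : (0:ℝ) < y - x)]
        nlinarith [h2]
      have hle : f x ≤ (F y - F x) / (y - x) :=
        le_of_tendsto (hslope.mono_left (nhdsWithin_mono x
          (fun t ht => Set.mem_compl_singleton_iff.mpr (ne_of_lt ht) :
            Set.Iio x ⊆ {x}ᶜ))) hev
      have h3 := (le_div_iff₀ (by linarith : (0:ℝ) < y - x)).mp hle
      nlinarith [h3]
  -- backward: supporting line ⇒ chord condition
  have hback : (∀ y ∈ Set.Icc a b, 0 ≤ F y - F x - (y - x) * f x) →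
      ∀ lam x₀ x₁ : ℝ, lam ∈ Set.Icc (0:ℝ) 1 → x₀ ∈ Set.Icc a b → x₁ ∈ Set.Icc a b →
        (1 - lam) * x₀ + lam * x₁ = x → F x ≤ (1 - lam) * F x₀ + lam * F x₁ := by
    intro hs lam x₀ x₁ hlam h0 h1 hc
    have e0 := hs x₀ h0
    have e1 := hs x₁ h1
    have hl0 : (0:ℝ) ≤ 1 - lam := by linarith [hlam.2]
    have m0 := mul_le_mul_of_nonneg_left e0 hl0
    have m1 := mul_le_mul_of_nonneg_left e1 hlam.1
    have hcf : ((1 - lam) * x₀ + lam * x₁ - x) * f x = 0 := by rw [hc]; ring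
    nlinarith [m0, m1, hcf]
  have hmain : (F x = convEnv a b F x) ↔
      ∀ y ∈ Set.Icc a b, 0 ≤ F y - F x - (y - x) * f x := hkey.trans ⟨hforward, hback⟩
  refine ⟨?_, hmain⟩
  constructor
  · intro h y hy
    rw [hid y hy]
    exact hmain.mp h y hy
  · intro h
    exact hmain.mpr fun y hy => (hid y hy) ▸ h y hy
end
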